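/- For k ≥ 3 and m ≥ 4, if 1 ≤ p ≤ q−2 and p+q = m−2, then σ(C̃^k_2(p+1, q−1)) − σ(C̃^k_2(p, q)) = (k−1)(q−p−1) > 0. -/

import Mathlib

open Finset

/-- A (finite) hypergraph: a finite vertex set together with a finite family of edges,
each edge being a finite set of vertices. -/
structure FinHypergraph (α : Type) where
  verts : Finset α
  edges : Finset (Finset α)

namespace FinHypergraph

variable {α β : Type}

/-- Every edge is a subset of the vertex set. -/
def Good (G : FinHypergraph α) : Prop := ∀ e ∈ G.edges, e ⊆ G.verts

/-- `k`-uniform: every edge has cardinality `k`. -/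
def Uniform (G : FinHypergraph α) (k : ℕ) : Prop := ∀ e ∈ G.edges, e.card = k

/-- A walk of length `p` from `u` to `v`: an alternating sequence of vertices and edges,
with consecutive vertices distinct and both lying in the connecting edge. -/
inductive Walk (G : FinHypergraph α) : α → α → ℕ → Prop
  | nil (v : α) : Walk G v v 0
  | cons {u w : α} (v : α) {p : ℕ} (e : Finset α) (he : e ∈ G.edges)
      (hu : u ∈ e) (hv : v ∈ e) (hne : u ≠ v) (hw : Walk G v w p) :
      Walk G u w (p + 1)

def Connected (G : FinHypergraph α) : Prop :=
  ∀ u ∈ G.verts, ∀ v ∈ G.verts, ∃ p, G.Walk u v p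

/-- Distance: length of a shortest walk (equivalently, of a shortest path). -/
noncomputable def dist (G : FinHypergraph α) (u v : α) : ℕ := sInf {p | G.Walk u v p}

/-- `σ_G(u) = ∑_{v ∈ V(G)} d_G(u,v)`. -/
noncomputable def transFrom [DecidableEq α] (G : FinHypergraph α) (u : α) : ℕ :=
  ∑ v ∈ G.verts, G.dist u v

/-- The transmission `σ(G)`: the sum of distances over all unordered pairs of
distinct vertices (distances being symmetric, this is half the sum over ordered pairs). -/
noncomputable def trans [DecidableEq α] (G : FinHypergraph α) : ℕ :=
  (∑ u ∈ G.verts, ∑ v ∈ G.verts, G.dist u v) / 2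

/-- `σ_G(A,B) = ∑_{a ∈ A, b ∈ B} d_G(a,b)`. -/
noncomputable def transBetween [DecidableEq α] (G : FinHypergraph α) (A B : Finset α) : ℕ :=
  ∑ a ∈ A, ∑ b ∈ B, G.dist a b

/-- The diameter: the maximum distance between two vertices. -/
noncomputable def diam (G : FinHypergraph α) : ℕ :=
  G.verts.sup fun u => G.verts.sup fun v => G.dist u v

/-- The degree of a vertex: the number of edges containing it. -/
def degree [DecidableEq α] (G : FinHypergraph α) (v : α) : ℕ :=
  (G.edges.filter fun e => v ∈ e).card

/-- A cycle of length `n+2` in `G`: vertices `v 0, …, v (n+1)` (all distinct) and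
distinct edges `e 0, …, e (n+1)` of `G` with `v i, v (i+1) ∈ e i` (indices mod `n+2`). -/
structure Cycle (G : FinHypergraph α) where
  n : ℕ
  v : Fin (n + 2) → α
  e : Fin (n + 2) → Finset α
  he : ∀ i, e i ∈ G.edges
  einj : Function.Injective e
  vinj : Function.Injective v
  mem_fst : ∀ i, v i ∈ e i
  mem_snd : ∀ i, v (i + 1) ∈ e i

/-- The length of a cycle (its number of edges). -/
def Cycle.length {G : FinHypergraph α} (C : G.Cycle) : ℕ := C.n + 2

/-- The set of edges of a cycle. -/
def Cycle.edgeFinset [DecidableEq α] {G : FinHypergraph α} (C : G.Cycle) : Finset (Finset α) :=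
  Finset.univ.image C.e

/-- Unicyclic: connected with exactly one cycle (all cycles have the same edge set). -/
def Unicyclic [DecidableEq α] (G : FinHypergraph α) : Prop :=
  G.Connected ∧ Nonempty G.Cycle ∧ ∀ C C' : G.Cycle, C.edgeFinset = C'.edgeFinset

/-- Isomorphism of hypergraphs. -/
def Isomorphic [DecidableEq β] (G : FinHypergraph α) (H : FinHypergraph β) : Prop :=
  ∃ f : α → β, Set.BijOn f ↑G.verts ↑H.verts ∧
    ∀ e : Finset α, e ⊆ G.verts → (e ∈ G.edges ↔ e.image f ∈ H.edges)

/-- Rename the vertices of a hypergraph along `f`. -/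
def mapHG [DecidableEq β] (f : α → β) (G : FinHypergraph α) : FinHypergraph β :=
  ⟨G.verts.image f, G.edges.image (Finset.image f)⟩

def unionHG [DecidableEq α] (G H : FinHypergraph α) : FinHypergraph α :=
  ⟨G.verts ∪ H.verts, G.edges ∪ H.edges⟩

def unionMany [DecidableEq α] {n : ℕ} (Hs : Fin n → FinHypergraph α) : FinHypergraph α :=
  ⟨Finset.univ.biUnion fun i => (Hs i).verts, Finset.univ.biUnion fun i => (Hs i).edges⟩

/-- Move the edge `e` from `u` to `x`: replace `e` by `(e \ {u}) ∪ {x}`. -/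
def moveEdge [DecidableEq α] (G : FinHypergraph α) (e : Finset α) (u x : α) : FinHypergraph α :=
  ⟨G.verts, insert (insert x (e.erase u)) (G.edges.erase e)⟩

/-- Move each edge of `S` from `u` to `x`. -/
def moveEdges [DecidableEq α] (G : FinHypergraph α) (S : Finset (Finset α)) (u x : α) :
    FinHypergraph α :=
  ⟨G.verts, (G.edges \ S) ∪ S.image fun e => insert x (e.erase u)⟩

/-- Delete a set of edges (keeping all vertices). -/
def deleteEdges [DecidableEq α] (G : FinHypergraph α) (S : Finset (Finset α)) : FinHypergraph α :=
  ⟨G.verts, G.edges \ S⟩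

open Classical in
/-- The vertex set of the component of `G` containing `u`. -/
noncomputable def component (G : FinHypergraph α) (u : α) : Finset α :=
  G.verts.filter fun x => ∃ p, G.Walk u x p

/-- The component of `G` containing `u`, as a hypergraph. -/
noncomputable def componentHG [DecidableEq α] (G : FinHypergraph α) (u : α) : FinHypergraph α :=
  ⟨G.component u, G.edges.filter fun e => e ⊆ G.component u⟩

/-- The `k`-uniform loose cycle with `m` edges `e_0, …, e_{m-1}`,
consecutive edges sharing exactly one vertex. -/
def looseCycle (m k : ℕ) : FinHypergraph ℕ where
  verts := Finset.range (m * (k - 1))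
  edges := (Finset.range m).image fun i =>
    (Finset.range k).image fun j => (i * (k - 1) + j) % (m * (k - 1))

/-- `C^k_2(t,s)`: two `k`-edges sharing exactly the two vertices `0,1`, with a hyperstar of
`t` edges attached at `0` and a hyperstar of `s` edges attached at `1`. -/
def Ck2 (k t s : ℕ) : FinHypergraph ℕ where
  verts := Finset.range ((t + s + 2) * (k - 1))
  edges :=
    {Finset.range k, insert 0 (insert 1 (Finset.Ico k (2 * k - 2)))} ∪
    ((Finset.range t).image fun i =>
      insert 0 (Finset.Ico (2 * k - 2 + i * (k - 1)) (2 * k - 2 + (i + 1) * (k - 1)))) ∪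
    ((Finset.range s).image fun j =>
      insert 1 (Finset.Ico (2 * k - 2 + t * (k - 1) + j * (k - 1))
        (2 * k - 2 + t * (k - 1) + (j + 1) * (k - 1))))

/-- `C̃^k_2(p,q)`: the loose 2-cycle on the two `k`-edges `{0,…,k-1}` and
`{0,1} ∪ {k,…,2k-3}` (sharing exactly `0,1`), with a pendant path of length `p`
attached at the degree-one vertex `2` of the first edge and a pendant path of length `q`
attached at the degree-one vertex `k` of the second edge. -/
def Ctilde (k p q : ℕ) : FinHypergraph ℕ where
  verts := Finset.range ((p + q + 2) * (k - 1))
  edges :=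
    {Finset.range k, insert 0 (insert 1 (Finset.Ico k (2 * k - 2)))} ∪
    ((Finset.range p).image fun i =>
      insert (if i = 0 then 2 else 2 * k - 2 + i * (k - 1) - 1)
        (Finset.Ico (2 * k - 2 + i * (k - 1)) (2 * k - 2 + (i + 1) * (k - 1)))) ∪
    ((Finset.range q).image fun j =>
      insert (if j = 0 then k else 2 * k - 2 + p * (k - 1) + j * (k - 1) - 1)
        (Finset.Ico (2 * k - 2 + p * (k - 1) + j * (k - 1))
          (2 * k - 2 + p * (k - 1) + (j + 1) * (k - 1))))

/-- The triangle with one pendant edge, `C^2_3(1,0,0)`. -/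
def triPendant : FinHypergraph ℕ :=
  ⟨Finset.range 4, {{0, 1}, {1, 2}, {0, 2}, {0, 3}}⟩

/-- `G_{u,v}(p,q)`: attach a loose pendant path of `p` `k`-edges at `u` and a loose pendant
path of `q` `k`-edges at `v`, using fresh vertices (the `Sum.inr` side). -/
def attachTwoPathsAt [DecidableEq α] (k : ℕ) (G : FinHypergraph α) (u v : α) (p q : ℕ) :
    FinHypergraph (α ⊕ ℕ) where
  verts := G.verts.image Sum.inl ∪ (Finset.range ((p + q) * (k - 1))).image Sum.inr
  edges :=
    G.edges.image (Finset.image Sum.inl) ∪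
    ((Finset.range p).image fun i =>
      insert (if i = 0 then Sum.inl u else Sum.inr (i * (k - 1) - 1))
        ((Finset.Ico (i * (k - 1)) ((i + 1) * (k - 1))).image Sum.inr)) ∪
    ((Finset.range q).image fun j =>
      insert (if j = 0 then Sum.inl v else Sum.inr (p * (k - 1) + j * (k - 1) - 1))
        ((Finset.Ico (p * (k - 1) + j * (k - 1)) (p * (k - 1) + (j + 1) * (k - 1))).image
          Sum.inr))

/-- `G_u(p,q)`: attach two loose pendant paths, of lengths `p` and `q`, at `u`. -/
def attachTwoPaths [DecidableEq α] (k : ℕ) (G : FinHypergraph α) (u : α) (p q : ℕ) :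
    FinHypergraph (α ⊕ ℕ) :=
  attachTwoPathsAt k G u u p q

/-- `G_{e,s}(H_1,…,H_{k-1})`: given a pendant edge `e = {w 0, …, w (k-1)}` of `G` at
`w (k-1)`, identify the root `vr i` of `H i` with `w (k-1)` for (0-based) `i < s`, and with
`w i` for `i ≥ s`. -/
def Ges [DecidableEq α] (G : FinHypergraph α) (k : ℕ) (hk : 2 ≤ k) (w : Fin k → α)
    (H : Fin (k - 1) → FinHypergraph α) (vr : Fin (k - 1) → α) (s : ℕ) : FinHypergraph α :=
  unionHG G (unionMany fun i : Fin (k - 1) =>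
    mapHG (Function.update id (vr i)
      (if (i : ℕ) < s then w ⟨k - 1, by omega⟩ else w (Fin.castLE (Nat.sub_le k 1) i))) (H i))

end FinHypergraph

open FinHypergraph


namespace Stmt10


inductive Desc where
  | S | A | B
  | P (a : ℕ) (t : Bool)
  | Q (a : ℕ) (t : Bool)
deriving DecidableEq

open Desc

/-- same-path descriptor distance -/
def ddp (a : ℕ) (ta : Bool) (b : ℕ) (tb : Bool) : ℕ :=
  if a = b then 1 else if a < b then b - a + (if ta then 0 else 1)
  else a - b + (if tb then 0 else 1)

/-- descriptor-level distance table -/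
def dd : Desc → Desc → ℕ
  | S, S => 1
  | S, A => 1
  | A, S => 1
  | S, B => 1
  | B, S => 1
  | A, A => 1
  | B, B => 1
  | A, B => 2
  | B, A => 2
  | S, P a _ => a + 1
  | P a _, S => a + 1
  | A, P a _ => a + 1
  | P a _, A => a + 1
  | B, P a _ => a + 2
  | P a _, B => a + 2
  | S, Q a _ => a + 1
  | Q a _, S => a + 1
  | B, Q a _ => a + 1
  | Q a _, B => a + 1
  | A, Q a _ => a + 2
  | Q a _, A => a + 2
  | P a _, Q b _ => a + b + 2
  | Q b _, P a _ => a + b + 2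
  | P a ta, P b tb => ddp a ta b tb
  | Q a ta, Q b tb => ddp a ta b tb

lemma ddp_comm (a b : ℕ) (ta tb : Bool) : ddp a ta b tb = ddp b tb a ta := by
  unfold ddp; split_ifs <;> omega

lemma dd_comm (a b : Desc) : dd a b = dd b a := by
  cases a <;> cases b <;> simp [dd, ddp_comm]

lemma ddp_self (a : ℕ) (t t' : Bool) : ddp a t a t' = 1 := by
  simp [ddp]

lemma dd_self (a : Desc) : dd a a = 1 := by
  cases a <;> simp [dd, ddp_self]

/-- descriptors allowed in edge A -/
def okA (d : Desc) : Prop := d = S ∨ d = A ∨ d = P 0 true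
def okB (d : Desc) : Prop := d = S ∨ d = B ∨ d = Q 0 true
def okP (i : ℕ) (d : Desc) : Prop := d = P i true ∨ ∃ t, d = P (i + 1) t
def okQ (j : ℕ) (d : Desc) : Prop := d = Q j true ∨ ∃ t, d = Q (j + 1) t

def CoEdge (α β : Desc) : Prop :=
  (okA α ∧ okA β) ∨ (okB α ∧ okB β) ∨ (∃ i, okP i α ∧ okP i β) ∨ (∃ j, okQ j α ∧ okQ j β)

lemma dd_coedge {α β : Desc} (h : CoEdge α β) : dd α β = 1 := by
  rcases h with ⟨h1, h2⟩ | ⟨h1, h2⟩ | ⟨i, h1, h2⟩ | ⟨j, h1, h2⟩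
  · rcases h1 with rfl | rfl | rfl <;> rcases h2 with rfl | rfl | rfl <;> simp [dd, ddp]
  · rcases h1 with rfl | rfl | rfl <;> rcases h2 with rfl | rfl | rfl <;> simp [dd, ddp]
  · rcases h1 with rfl | ⟨t1, rfl⟩ <;> rcases h2 with rfl | ⟨t2, rfl⟩ <;>
      simp [dd, ddp] <;> first | omega | (split_ifs <;> omega)
  · rcases h1 with rfl | ⟨t1, rfl⟩ <;> rcases h2 with rfl | ⟨t2, rfl⟩ <;>
      simp [dd, ddp] <;> first | omega | (split_ifs <;> omega)

lemma dd_lip (d : Desc) {α β : Desc} (h : CoEdge α β) : dd d α ≤ dd d β + 1 := by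
  rcases h with ⟨h1, h2⟩ | ⟨h1, h2⟩ | ⟨i, h1, h2⟩ | ⟨j, h1, h2⟩
  · rcases h1 with rfl | rfl | rfl <;> rcases h2 with rfl | rfl | rfl <;>
      cases d <;> simp [dd, ddp] <;> first | omega | (split_ifs <;> omega)
  · rcases h1 with rfl | rfl | rfl <;> rcases h2 with rfl | rfl | rfl <;>
      cases d <;> simp [dd, ddp] <;> first | omega | (split_ifs <;> omega)
  · rcases h1 with rfl | ⟨t1, rfl⟩ <;> rcases h2 with rfl | ⟨t2, rfl⟩ <;>
      cases d <;> simp [dd, ddp] <;> first | omega | (split_ifs <;> omega)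
  · rcases h1 with rfl | ⟨t1, rfl⟩ <;> rcases h2 with rfl | ⟨t2, rfl⟩ <;>
      cases d <;> simp [dd, ddp] <;> first | omega | (split_ifs <;> omega)


open Finset Desc in
/-- position descriptor of a vertex of `Ctilde k p q` -/
def desc (k p q x : ℕ) : Desc :=
  if x = 2 then .P 0 true
  else if x = k then .Q 0 true
  else if x < 2 then .S
  else if x < k then .A
  else if x < 2 * k - 2 then .B
  else if x < (2 + p) * (k - 1) then
    .P (x / (k - 1) - 1) (decide (x % (k - 1) = k - 2 ∧ x / (k - 1) < p + 1))
  else .Q (x / (k - 1) - 1 - p) (decide (x % (k - 1) = k - 2 ∧ x / (k - 1) < p + q + 1))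

section Params

variable {k p q : ℕ} (hk : 3 ≤ k)

lemma expand_base (i : ℕ) : 2 * k - 2 + i * (k - 1) = (2 + i) * (k - 1) := by
  rw [Nat.add_mul]; omega

include hk

lemma desc_S {x : ℕ} (hx : x < 2) : desc k p q x = Desc.S := by
  unfold desc; rw [if_neg (by omega), if_neg (by omega), if_pos hx]

lemma desc_two : desc k p q 2 = Desc.P 0 true := by
  unfold desc; rw [if_pos rfl]

lemma desc_A {x : ℕ} (h2 : 2 < x) (hx : x < k) : desc k p q x = Desc.A := by
  unfold desc
  rw [if_neg (by omega), if_neg (by omega), if_neg (by omega), if_pos hx]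

lemma desc_k : desc k p q k = Desc.Q 0 true := by
  unfold desc; rw [if_neg (by omega), if_pos rfl]

lemma desc_B {x : ℕ} (h2 : k < x) (hx : x < 2 * k - 2) : desc k p q x = Desc.B := by
  unfold desc
  rw [if_neg (by omega), if_neg (by omega), if_neg (by omega), if_neg (by omega), if_pos hx]

lemma desc_P {i s : ℕ} (hi : i < p) (hs : s < k - 1) :
    desc k p q ((2 + i) * (k - 1) + s) = Desc.P (i + 1) (decide (s = k - 2 ∧ i + 1 < p)) := by
  have hr : 2 ≤ k - 1 := by omega
  have hge : 2 * (k - 1) ≤ (2 + i) * (k - 1) := Nat.mul_le_mul_right _ (by omega)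
  have hlt : (2 + i) * (k - 1) + s < (2 + p) * (k - 1) := by
    calc (2 + i) * (k - 1) + s < (2 + i) * (k - 1) + (k - 1) := by omega
    _ = (3 + i) * (k - 1) := by ring
    _ ≤ (2 + p) * (k - 1) := Nat.mul_le_mul_right _ (by omega)
  have hdiv : ((2 + i) * (k - 1) + s) / (k - 1) = 2 + i := by
    rw [Nat.add_comm, Nat.add_mul_div_right _ _ (by omega : 0 < k - 1),
      Nat.div_eq_of_lt hs]
    omega
  have hmod : ((2 + i) * (k - 1) + s) % (k - 1) = s := by
    rw [Nat.add_comm, Nat.add_mul_mod_self_right, Nat.mod_eq_of_lt hs]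
  unfold desc
  rw [if_neg (by omega), if_neg (by omega), if_neg (by omega), if_neg (by omega),
    if_neg (by omega), if_pos hlt, hdiv, hmod]
  congr 1
  · omega
  · exact decide_eq_decide.mpr (by constructor <;> (rintro ⟨h1, h2⟩; exact ⟨by omega, by omega⟩))

lemma desc_Q {j s : ℕ} (hj : j < q) (hs : s < k - 1) :
    desc k p q ((2 + p + j) * (k - 1) + s) =
      Desc.Q (j + 1) (decide (s = k - 2 ∧ j + 1 < q)) := by
  have hr : 2 ≤ k - 1 := by omega
  have hge : (2 + p) * (k - 1) ≤ (2 + p + j) * (k - 1) := Nat.mul_le_mul_right _ (by omega)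
  have hge2 : 2 * (k - 1) ≤ (2 + p) * (k - 1) := Nat.mul_le_mul_right _ (by omega)
  have hdiv : ((2 + p + j) * (k - 1) + s) / (k - 1) = 2 + p + j := by
    rw [Nat.add_comm, Nat.add_mul_div_right _ _ (by omega : 0 < k - 1),
      Nat.div_eq_of_lt hs]
    omega
  have hmod : ((2 + p + j) * (k - 1) + s) % (k - 1) = s := by
    rw [Nat.add_comm, Nat.add_mul_mod_self_right, Nat.mod_eq_of_lt hs]
  unfold desc
  rw [if_neg (by omega), if_neg (by omega), if_neg (by omega), if_neg (by omega),
    if_neg (by omega), if_neg (by omega), hdiv, hmod]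
  congr 1
  · omega
  · exact decide_eq_decide.mpr (by constructor <;> (rintro ⟨h1, h2⟩; exact ⟨by omega, by omega⟩))

end Params

/-- p-side path edge -/
def eP (k : ℕ) (i : ℕ) : Finset ℕ :=
  insert (if i = 0 then 2 else 2 * k - 2 + i * (k - 1) - 1)
    (Finset.Ico (2 * k - 2 + i * (k - 1)) (2 * k - 2 + (i + 1) * (k - 1)))

/-- q-side path edge -/
def eQ (k p : ℕ) (j : ℕ) : Finset ℕ :=
  insert (if j = 0 then k else 2 * k - 2 + p * (k - 1) + j * (k - 1) - 1)
    (Finset.Ico (2 * k - 2 + p * (k - 1) + j * (k - 1))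
      (2 * k - 2 + p * (k - 1) + (j + 1) * (k - 1)))

def eA (k : ℕ) : Finset ℕ := Finset.range k
def eB (k : ℕ) : Finset ℕ := insert 0 (insert 1 (Finset.Ico k (2 * k - 2)))

lemma mem_edges_iff {k p q : ℕ} (e : Finset ℕ) :
    e ∈ (FinHypergraph.Ctilde k p q).edges ↔
      e = eA k ∨ e = eB k ∨ (∃ i < p, e = eP k i) ∨ ∃ j < q, e = eQ k p j := by
  simp only [FinHypergraph.Ctilde]
  constructor
  · intro h
    rcases Finset.mem_union.1 h with h | h
    · rcases Finset.mem_union.1 h with h | h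
      · rcases Finset.mem_insert.1 h with h | h
        · exact Or.inl h
        · exact Or.inr (Or.inl (Finset.mem_singleton.1 h))
      · obtain ⟨i, hi, he⟩ := Finset.mem_image.1 h
        exact Or.inr (Or.inr (Or.inl ⟨i, Finset.mem_range.1 hi, he.symm⟩))
    · obtain ⟨j, hj, he⟩ := Finset.mem_image.1 h
      exact Or.inr (Or.inr (Or.inr ⟨j, Finset.mem_range.1 hj, he.symm⟩))
  · rintro (rfl | rfl | ⟨i, hi, rfl⟩ | ⟨j, hj, rfl⟩)
    · exact Finset.mem_union_left _ (Finset.mem_union_left _ (Finset.mem_insert_self _ _))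
    · exact Finset.mem_union_left _ (Finset.mem_union_left _
        (Finset.mem_insert_of_mem (Finset.mem_singleton_self _)))
    · exact Finset.mem_union_left _ (Finset.mem_union_right _
        (Finset.mem_image.2 ⟨i, Finset.mem_range.2 hi, rfl⟩))
    · exact Finset.mem_union_right _ (Finset.mem_image.2 ⟨j, Finset.mem_range.2 hj, rfl⟩)

section Params2

variable {k p q : ℕ} (hk : 3 ≤ k)

include hk

lemma okA_of_mem {x : ℕ} (hx : x ∈ eA k) : okA (desc k p q x) := by
  simp only [eA, Finset.mem_range] at hx
  rcases Nat.lt_trichotomy x 2 with h | rfl | h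
  · exact Or.inl (desc_S hk h)
  · exact Or.inr (Or.inr (desc_two hk))
  · exact Or.inr (Or.inl (desc_A hk h hx))

lemma okB_of_mem {x : ℕ} (hx : x ∈ eB k) : okB (desc k p q x) := by
  simp only [eB, Finset.mem_insert, Finset.mem_Ico] at hx
  rcases hx with rfl | rfl | ⟨h1, h2⟩
  · exact Or.inl (desc_S hk (by omega))
  · exact Or.inl (desc_S hk (by omega))
  · rcases Nat.eq_or_lt_of_le h1 with rfl | h1
    · exact Or.inr (Or.inr (desc_k hk))
    · exact Or.inr (Or.inl (desc_B hk h1 h2))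

lemma okP_of_mem {i x : ℕ} (hi : i < p) (hx : x ∈ eP k i) : okP i (desc k p q x) := by
  simp only [eP, Finset.mem_insert, Finset.mem_Ico] at hx
  rcases hx with rfl | ⟨h1, h2⟩
  · rcases Nat.eq_zero_or_pos i with rfl | hi0
    · rw [if_pos rfl]
      exact Or.inl (desc_two hk)
    · rw [if_neg (by omega)]
      have h3 : i * (k - 1) = (i - 1) * (k - 1) + (k - 1) := by
        nth_rewrite 1 [show i = i - 1 + 1 by omega]
        ring
      have he : 2 * k - 2 + i * (k - 1) - 1 = (2 + (i - 1)) * (k - 1) + (k - 2) := by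
        have h5 : (2 + (i - 1)) * (k - 1) = 2 * (k - 1) + (i - 1) * (k - 1) := by ring
        omega
      rw [he, desc_P hk (by omega) (by omega)]
      left
      congr 1
      · omega
      · have hcond : (k - 2 = k - 2 ∧ i - 1 + 1 < p) := ⟨rfl, by omega⟩
        simp [hcond]
  · rw [expand_base] at h1 h2
    have he : x = (2 + i) * (k - 1) + (x - (2 + i) * (k - 1)) := by omega
    have hlt : x - (2 + i) * (k - 1) < k - 1 := by
      have : (2 + (i+1)) * (k-1) = (2+i) * (k-1) + (k-1) := by ring
      omega
    rw [he, desc_P hk hi hlt]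
    exact Or.inr ⟨_, rfl⟩

lemma okQ_of_mem {j x : ℕ} (hj : j < q) (hx : x ∈ eQ k p j) : okQ j (desc k p q x) := by
  simp only [eQ, Finset.mem_insert, Finset.mem_Ico] at hx
  have key : ∀ n, 2 * k - 2 + p * (k - 1) + n * (k - 1) = (2 + p + n) * (k - 1) := by
    intro n; rw [Nat.add_mul, Nat.add_mul]; omega
  rcases hx with rfl | ⟨h1, h2⟩
  · rcases Nat.eq_zero_or_pos j with rfl | hj0
    · rw [if_pos rfl]
      exact Or.inl (desc_k hk)
    · rw [if_neg (by omega)]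
      have h3 : j * (k - 1) = (j - 1) * (k - 1) + (k - 1) := by
        nth_rewrite 1 [show j = j - 1 + 1 by omega]
        ring
      have he : 2 * k - 2 + p * (k - 1) + j * (k - 1) - 1
          = (2 + p + (j - 1)) * (k - 1) + (k - 2) := by
        have h5 : (2 + p + (j - 1)) * (k - 1) = 2 * (k - 1) + p * (k - 1) + (j - 1) * (k - 1) := by
          ring
        omega
      rw [he, desc_Q hk (by omega) (by omega)]
      left
      congr 1
      · omega
      · have hcond : (k - 2 = k - 2 ∧ j - 1 + 1 < q) := ⟨rfl, by omega⟩
        simp [hcond]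
  · rw [key] at h1 h2
    have he : x = (2 + p + j) * (k - 1) + (x - (2 + p + j) * (k - 1)) := by omega
    have hlt : x - (2 + p + j) * (k - 1) < k - 1 := by
      have : (2 + p + (j+1)) * (k-1) = (2+p+j) * (k-1) + (k-1) := by ring
      omega
    rw [he, desc_Q hk hj hlt]
    exact Or.inr ⟨_, rfl⟩

lemma coedge_of_mem {e : Finset ℕ} (he : e ∈ (FinHypergraph.Ctilde k p q).edges)
    {x y : ℕ} (hx : x ∈ e) (hy : y ∈ e) :
    CoEdge (desc k p q x) (desc k p q y) := by
  rcases (mem_edges_iff e).1 he with rfl | rfl | ⟨i, hi, rfl⟩ | ⟨j, hj, rfl⟩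
  · exact Or.inl ⟨okA_of_mem hk hx, okA_of_mem hk hy⟩
  · exact Or.inr (Or.inl ⟨okB_of_mem hk hx, okB_of_mem hk hy⟩)
  · exact Or.inr (Or.inr (Or.inl ⟨i, okP_of_mem hk hi hx, okP_of_mem hk hi hy⟩))
  · exact Or.inr (Or.inr (Or.inr ⟨j, okQ_of_mem hk hj hx, okQ_of_mem hk hj hy⟩))

end Params2


section WalkGeneric
open FinHypergraph

variable {α : Type} {G : FinHypergraph α}

lemma walk_append {u v w : α} {m n : ℕ} (h1 : G.Walk u v m) (h2 : G.Walk v w n) :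
    G.Walk u w (m + n) := by
  induction h1 with
  | nil v => simpa using h2
  | cons x e he hu hv hne hw ih =>
    rw [Nat.add_right_comm]
    exact Walk.cons x e he hu hv hne (ih h2)

lemma walk_symm {u v : α} {m : ℕ} (h : G.Walk u v m) : G.Walk v u m := by
  induction h with
  | nil v => exact Walk.nil v
  | cons x e he hu hv hne hw ih =>
    exact walk_append ih (Walk.cons _ e he hv hu hne.symm (Walk.nil _))

lemma walk_one {e : Finset α} (he : e ∈ G.edges) {x y : α} (hx : x ∈ e) (hy : y ∈ e)
    (hne : x ≠ y) : G.Walk x y 1 :=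
  Walk.cons y e he hx hy hne (Walk.nil y)

lemma walk_cast {u v : α} {m n : ℕ} (h : G.Walk u v m) (hmn : m = n) : G.Walk u v n :=
  hmn ▸ h

end WalkGeneric

/-- ddp evaluation lemmas -/
lemma ddp_eq_same {a b : ℕ} {ta tb : Bool} (h : a = b) : ddp a ta b tb = 1 := by
  unfold ddp; rw [if_pos h]

lemma ddp_eq_lt {a b : ℕ} {ta tb : Bool} (h : a < b) :
    ddp a ta b tb = b - a + (if ta then 0 else 1) := by
  unfold ddp; rw [if_neg (by omega), if_pos h]

lemma ddp_eq_gt {a b : ℕ} {ta tb : Bool} (h : b < a) :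
    ddp a ta b tb = a - b + (if tb then 0 else 1) := by
  unfold ddp; rw [if_neg (by omega), if_neg (by omega)]

def Dfun (k p q u v : ℕ) : ℕ :=
  if u = v then 0 else dd (desc k p q u) (desc k p q v)

section Params3
open FinHypergraph Finset

variable {k p q : ℕ} (hk : 3 ≤ k)

include hk

lemma walk_le {u v L : ℕ} (h : (Ctilde k p q).Walk u v L) : Dfun k p q u v ≤ L := by
  induction h with
  | nil v => simp [Dfun]
  | @cons u w v L e he hu hv hne hw ih =>
    unfold Dfun
    split
    · exact Nat.zero_le _
    · by_cases hvw : v = w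
      · subst hvw
        rw [dd_coedge (coedge_of_mem hk he hu hv)]
        omega
      · have h1 : dd (desc k p q u) (desc k p q w) ≤ dd (desc k p q v) (desc k p q w) + 1 := by
          rw [dd_comm, dd_comm (desc k p q v)]
          exact dd_lip _ (coedge_of_mem hk he hu hv)
        have h2 : dd (desc k p q v) (desc k p q w) ≤ L := by
          simpa [Dfun, hvw] using ih
        omega

omit hk

/-- joint vertex at the bottom of p-side edge `i` -/
def jointP (k i : ℕ) : ℕ := if i = 0 then 2 else 2 * k - 2 + i * (k - 1) - 1

/-- joint vertex at the bottom of q-side edge `j` -/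
def jointQ (k p j : ℕ) : ℕ := if j = 0 then k else 2 * k - 2 + p * (k - 1) + j * (k - 1) - 1

lemma eA_mem : eA k ∈ (Ctilde k p q).edges := (mem_edges_iff _).2 (Or.inl rfl)
lemma eB_mem : eB k ∈ (Ctilde k p q).edges := (mem_edges_iff _).2 (Or.inr (Or.inl rfl))
lemma eP_mem {i : ℕ} (hi : i < p) : eP k i ∈ (Ctilde k p q).edges :=
  (mem_edges_iff _).2 (Or.inr (Or.inr (Or.inl ⟨i, hi, rfl⟩)))
lemma eQ_mem {j : ℕ} (hj : j < q) : eQ k p j ∈ (Ctilde k p q).edges :=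
  (mem_edges_iff _).2 (Or.inr (Or.inr (Or.inr ⟨j, hj, rfl⟩)))

lemma jointP_mem (i : ℕ) : jointP k i ∈ eP k i := by
  unfold jointP eP
  split <;> exact Finset.mem_insert_self _ _

lemma jointQ_mem (j : ℕ) : jointQ k p j ∈ eQ k p j := by
  unfold jointQ eQ
  split <;> exact Finset.mem_insert_self _ _

lemma Ico_subset_eP {i x : ℕ} (h1 : 2 * k - 2 + i * (k - 1) ≤ x)
    (h2 : x < 2 * k - 2 + (i + 1) * (k - 1)) : x ∈ eP k i :=
  Finset.mem_insert_of_mem (Finset.mem_Ico.2 ⟨h1, h2⟩)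

lemma Ico_subset_eQ {j x : ℕ} (h1 : 2 * k - 2 + p * (k - 1) + j * (k - 1) ≤ x)
    (h2 : x < 2 * k - 2 + p * (k - 1) + (j + 1) * (k - 1)) : x ∈ eQ k p j :=
  Finset.mem_insert_of_mem (Finset.mem_Ico.2 ⟨h1, h2⟩)

include hk

lemma jointP_lt (i : ℕ) : jointP k i < 2 * k - 2 + i * (k - 1) := by
  unfold jointP
  have h : (0:ℕ) ≤ i * (k-1) := Nat.zero_le _
  split <;> omega

lemma jointQ_lt (j : ℕ) : jointQ k p j < 2 * k - 2 + p * (k - 1) + j * (k - 1) := by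
  unfold jointQ
  have h : (0:ℕ) ≤ j * (k-1) := Nat.zero_le _
  have h2 : (0:ℕ) ≤ p * (k-1) := Nat.zero_le _
  split <;> omega

lemma jointP_succ_mem_Ico (i : ℕ) :
    2 * k - 2 + i * (k - 1) ≤ jointP k (i + 1) ∧
    jointP k (i + 1) < 2 * k - 2 + (i + 1) * (k - 1) := by
  unfold jointP
  rw [if_neg (by omega)]
  have h : (i + 1) * (k - 1) = i * (k - 1) + (k - 1) := by ring
  omega

lemma jointQ_succ_mem_Ico (j : ℕ) :
    2 * k - 2 + p * (k - 1) + j * (k - 1) ≤ jointQ k p (j + 1) ∧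
    jointQ k p (j + 1) < 2 * k - 2 + p * (k - 1) + (j + 1) * (k - 1) := by
  unfold jointQ
  rw [if_neg (by omega)]
  have h : (j + 1) * (k - 1) = j * (k - 1) + (k - 1) := by ring
  omega

/-- walks down the p-side path, from a joint to any vertex of a deeper edge -/
lemma walkP' (n : ℕ) : ∀ a, a + n < p → ∀ x, 2 * k - 2 + (a + n) * (k - 1) ≤ x →
    x < 2 * k - 2 + (a + n + 1) * (k - 1) →
    (Ctilde k p q).Walk (jointP k a) x (n + 1) := by
  induction n with
  | zero =>
    intro a ha x h1 h2
    simp only [Nat.add_zero] at ha h1 h2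
    exact walk_one (eP_mem ha) (jointP_mem a) (Ico_subset_eP h1 h2)
      (by have := jointP_lt hk a; omega)
  | succ n ih =>
    intro a ha x h1 h2
    rw [show a + (n + 1) = a + n + 1 by omega] at ha h1 h2
    have hj := jointP_succ_mem_Ico (k := k) hk (a + n)
    have w1 : (Ctilde k p q).Walk (jointP k a) (jointP k (a + n + 1)) (n + 1) :=
      ih a (by omega) _ hj.1 hj.2
    have w2 : (Ctilde k p q).Walk (jointP k (a + n + 1)) x 1 := by
      refine walk_one (eP_mem (show a + n + 1 < p by omega)) (jointP_mem _)
        (Ico_subset_eP (by omega) (by omega)) ?_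
      have := jointP_lt hk (a + n + 1)
      omega
    exact walk_append w1 w2

/-- walks down the q-side path -/
lemma walkQ' (n : ℕ) : ∀ a, a + n < q → ∀ x, 2 * k - 2 + p * (k - 1) + (a + n) * (k - 1) ≤ x →
    x < 2 * k - 2 + p * (k - 1) + (a + n + 1) * (k - 1) →
    (Ctilde k p q).Walk (jointQ k p a) x (n + 1) := by
  induction n with
  | zero =>
    intro a ha x h1 h2
    simp only [Nat.add_zero] at ha h1 h2
    exact walk_one (eQ_mem ha) (jointQ_mem a) (Ico_subset_eQ h1 h2)
      (by have := jointQ_lt (p := p) hk a; omega)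
  | succ n ih =>
    intro a ha x h1 h2
    rw [show a + (n + 1) = a + n + 1 by omega] at ha h1 h2
    have hj := jointQ_succ_mem_Ico (k := k) (p := p) hk (a + n)
    have w1 : (Ctilde k p q).Walk (jointQ k p a) (jointQ k p (a + n + 1)) (n + 1) :=
      ih a (by omega) _ hj.1 hj.2
    have w2 : (Ctilde k p q).Walk (jointQ k p (a + n + 1)) x 1 := by
      refine walk_one (eQ_mem (show a + n + 1 < q by omega)) (jointQ_mem _)
        (Ico_subset_eQ (by omega) (by omega)) ?_
      have := jointQ_lt (p := p) hk (a + n + 1)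
      omega
    exact walk_append w1 w2

omit hk in
lemma jointP_zero : jointP k 0 = 2 := rfl
omit hk in
lemma jointQ_zero : jointQ k p 0 = k := rfl

/-- walk from vertex 2 to a p-interval vertex -/
lemma walk_two_P {i x : ℕ} (hi : i < p) (h1 : 2 * k - 2 + i * (k - 1) ≤ x)
    (h2 : x < 2 * k - 2 + (i + 1) * (k - 1)) : (Ctilde k p q).Walk 2 x (i + 1) := by
  have := walkP' (k := k) (p := p) (q := q) hk i 0 (by omega) x
    (by rw [Nat.zero_add]; exact h1) (by rw [Nat.zero_add]; exact h2)
  rwa [jointP_zero] at this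

/-- walk from vertex k to a q-interval vertex -/
lemma walk_k_Q {j x : ℕ} (hj : j < q) (h1 : 2 * k - 2 + p * (k - 1) + j * (k - 1) ≤ x)
    (h2 : x < 2 * k - 2 + p * (k - 1) + (j + 1) * (k - 1)) :
    (Ctilde k p q).Walk k x (j + 1) := by
  have := walkQ' (k := k) (p := p) (q := q) hk j 0 (by omega) x
    (by rw [Nat.zero_add]; exact h1) (by rw [Nat.zero_add]; exact h2)
  rwa [jointQ_zero] at this

/-- desc of a p-interval vertex, existential form -/
lemma descP_of_Ico {i x : ℕ} (hi : i < p) (h1 : 2 * k - 2 + i * (k - 1) ≤ x)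
    (h2 : x < 2 * k - 2 + (i + 1) * (k - 1)) :
    desc k p q x = Desc.P (i + 1)
      (decide (x - (2 + i) * (k - 1) = k - 2 ∧ i + 1 < p)) := by
  rw [expand_base] at h1
  have h2' : x < (2 + i) * (k - 1) + (k - 1) := by
    have h3 : (2 + (i + 1)) * (k - 1) = (2 + i) * (k - 1) + (k - 1) := by ring
    rw [expand_base] at h2
    omega
  have he : x = (2 + i) * (k - 1) + (x - (2 + i) * (k - 1)) := by omega
  nth_rewrite 1 [he]
  exact desc_P hk hi (by omega)

lemma descQ_of_Ico {j x : ℕ} (hj : j < q) (h1 : 2 * k - 2 + p * (k - 1) + j * (k - 1) ≤ x)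
    (h2 : x < 2 * k - 2 + p * (k - 1) + (j + 1) * (k - 1)) :
    desc k p q x = Desc.Q (j + 1)
      (decide (x - (2 + p + j) * (k - 1) = k - 2 ∧ j + 1 < q)) := by
  have key : ∀ n, 2 * k - 2 + p * (k - 1) + n * (k - 1) = (2 + p + n) * (k - 1) := by
    intro n; rw [Nat.add_mul, Nat.add_mul]; omega
  rw [key] at h1
  have h2' : x < (2 + p + j) * (k - 1) + (k - 1) := by
    have h3 : (2 + p + (j + 1)) * (k - 1) = (2 + p + j) * (k - 1) + (k - 1) := by ring
    rw [key] at h2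
    omega
  have he : x = (2 + p + j) * (k - 1) + (x - (2 + p + j) * (k - 1)) := by omega
  nth_rewrite 1 [he]
  exact desc_Q hk hj (by omega)

/-- trichotomy of vertex positions -/
lemma pos_cases {x : ℕ} (hx : x < (p + q + 2) * (k - 1)) :
    x < 2 * k - 2 ∨
    (∃ i < p, 2 * k - 2 + i * (k - 1) ≤ x ∧ x < 2 * k - 2 + (i + 1) * (k - 1)) ∨
    (∃ j < q, 2 * k - 2 + p * (k - 1) + j * (k - 1) ≤ x ∧
      x < 2 * k - 2 + p * (k - 1) + (j + 1) * (k - 1)) := by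
  by_cases h1 : x < 2 * k - 2
  · exact Or.inl h1
  right
  have hr : 0 < k - 1 := by omega
  have hd := Nat.div_add_mod x (k - 1)
  have hmod := Nat.mod_lt x hr
  set d := x / (k - 1) with hdd
  have hd2 : 2 ≤ d := by
    rcases Nat.lt_or_ge d 2 with h | h
    · exfalso
      have : (k - 1) * d ≤ (k - 1) * 1 := Nat.mul_le_mul_left _ (by omega)
      omega
    · exact h
  have hdlt : d < 2 + p + q := by
    rcases Nat.lt_or_ge d (2 + p + q) with h | h
    · exact h
    · exfalso
      have : (k - 1) * (2 + p + q) ≤ (k - 1) * d := Nat.mul_le_mul_left _ h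
      have h5 : (p + q + 2) * (k - 1) = (k - 1) * (2 + p + q) := by ring
      omega
  by_cases h2 : d < 2 + p
  · left
    refine ⟨d - 2, by omega, ?_, ?_⟩
    · have e1 : 2 * k - 2 + (d - 2) * (k - 1) = (k - 1) * d := by
        have h7 : (d - 2 + 2) * (k - 1) = (d - 2) * (k - 1) + 2 * (k - 1) := by ring
        have h6 : d - 2 + 2 = d := by omega
        have h9 : (d - 2 + 2) * (k - 1) = d * (k - 1) := by rw [h6]
        have h10 : d * (k - 1) = (k - 1) * d := by ring
        omega
      omega
    · have e1 : 2 * k - 2 + (d - 2 + 1) * (k - 1) = (k - 1) * d + (k - 1) := by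
        have h7 : (d - 2 + 1) * (k - 1) = (d - 2) * (k - 1) + (k - 1) := by ring
        have h8 : (d - 2 + 2) * (k - 1) = (d - 2) * (k - 1) + 2 * (k - 1) := by ring
        have h6 : d - 2 + 2 = d := by omega
        have h9 : (d - 2 + 2) * (k - 1) = d * (k - 1) := by rw [h6]
        have h10 : d * (k - 1) = (k - 1) * d := by ring
        omega
      omega
  · right
    refine ⟨d - 2 - p, by omega, ?_, ?_⟩
    · have e1 : 2 * k - 2 + p * (k - 1) + (d - 2 - p) * (k - 1) = (k - 1) * d := by
        have h6 : d - 2 - p + (2 + p) = d := by omega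
        have h7 : (d - 2 - p + (2 + p)) * (k - 1)
            = (d - 2 - p) * (k - 1) + 2 * (k - 1) + p * (k - 1) := by ring
        have h9 : (d - 2 - p + (2 + p)) * (k - 1) = d * (k - 1) := by rw [h6]
        have h10 : d * (k - 1) = (k - 1) * d := by ring
        omega
      omega
    · have e1 : 2 * k - 2 + p * (k - 1) + (d - 2 - p + 1) * (k - 1)
          = (k - 1) * d + (k - 1) := by
        have h6 : d - 2 - p + (2 + p) = d := by omega
        have h7 : (d - 2 - p + (2 + p)) * (k - 1)
            = (d - 2 - p) * (k - 1) + 2 * (k - 1) + p * (k - 1) := by ring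
        have h9 : (d - 2 - p + (2 + p)) * (k - 1) = d * (k - 1) := by rw [h6]
        have h10 : d * (k - 1) = (k - 1) * d := by ring
        have h11 : (d - 2 - p + 1) * (k - 1) = (d - 2 - p) * (k - 1) + (k - 1) := by ring
        omega
      omega

end Params3

/-! dd evaluation rfl-lemmas -/
lemma dd_SS : dd .S .S = 1 := rfl
lemma dd_SA : dd .S .A = 1 := rfl
lemma dd_AS : dd .A .S = 1 := rfl
lemma dd_SB : dd .S .B = 1 := rfl
lemma dd_BS : dd .B .S = 1 := rfl
lemma dd_AA : dd .A .A = 1 := rfl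
lemma dd_BB : dd .B .B = 1 := rfl
lemma dd_AB : dd .A .B = 2 := rfl
lemma dd_BA : dd .B .A = 2 := rfl
lemma dd_SP (b : ℕ) (t : Bool) : dd .S (.P b t) = b + 1 := rfl
lemma dd_PS (b : ℕ) (t : Bool) : dd (.P b t) .S = b + 1 := rfl
lemma dd_AP (b : ℕ) (t : Bool) : dd .A (.P b t) = b + 1 := rfl
lemma dd_PA (b : ℕ) (t : Bool) : dd (.P b t) .A = b + 1 := rfl
lemma dd_BP (b : ℕ) (t : Bool) : dd .B (.P b t) = b + 2 := rfl
lemma dd_PB (b : ℕ) (t : Bool) : dd (.P b t) .B = b + 2 := rfl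
lemma dd_SQ (b : ℕ) (t : Bool) : dd .S (.Q b t) = b + 1 := rfl
lemma dd_QS (b : ℕ) (t : Bool) : dd (.Q b t) .S = b + 1 := rfl
lemma dd_BQ (b : ℕ) (t : Bool) : dd .B (.Q b t) = b + 1 := rfl
lemma dd_QB (b : ℕ) (t : Bool) : dd (.Q b t) .B = b + 1 := rfl
lemma dd_AQ (b : ℕ) (t : Bool) : dd .A (.Q b t) = b + 2 := rfl
lemma dd_QA (b : ℕ) (t : Bool) : dd (.Q b t) .A = b + 2 := rfl
lemma dd_PQ (a b : ℕ) (ta tb : Bool) : dd (.P a ta) (.Q b tb) = a + b + 2 := rfl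
lemma dd_QP (a b : ℕ) (ta tb : Bool) : dd (.Q b tb) (.P a ta) = a + b + 2 := rfl
lemma dd_PP (a b : ℕ) (ta tb : Bool) : dd (.P a ta) (.P b tb) = ddp a ta b tb := rfl
lemma dd_QQ (a b : ℕ) (ta tb : Bool) : dd (.Q a ta) (.Q b tb) = ddp a ta b tb := rfl

section Params4
open FinHypergraph Finset

variable {k p q : ℕ} (hk : 3 ≤ k)

lemma mem_eA {y : ℕ} (h : y < k) : y ∈ eA k := Finset.mem_range.2 h

lemma mem_eB {y : ℕ} (h : y = 0 ∨ y = 1 ∨ (k ≤ y ∧ y < 2 * k - 2)) : y ∈ eB k := by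
  unfold eB
  rcases h with rfl | rfl | ⟨h1, h2⟩
  · exact Finset.mem_insert_self _ _
  · exact Finset.mem_insert_of_mem (Finset.mem_insert_self _ _)
  · exact Finset.mem_insert_of_mem (Finset.mem_insert_of_mem (Finset.mem_Ico.2 ⟨h1, h2⟩))

include hk

lemma walk_cycP {u i x : ℕ} (hu : u < 2 * k - 2) (hi : i < p)
    (h1 : 2 * k - 2 + i * (k - 1) ≤ x) (h2 : x < 2 * k - 2 + (i + 1) * (k - 1)) :
    (Ctilde k p q).Walk u x (dd (desc k p q u) (desc k p q x)) := by
  rw [descP_of_Ico hk hi h1 h2]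
  have wtop : (Ctilde k p q).Walk 2 x (i + 1) := walk_two_P hk hi h1 h2
  rcases Nat.lt_trichotomy u 2 with hu2 | hu2 | hu2
  · rw [desc_S hk hu2, dd_SP]
    have w1 : (Ctilde k p q).Walk u 2 1 :=
      walk_one eA_mem (mem_eA (by omega)) (mem_eA (by omega)) (by omega)
    exact walk_cast (walk_append w1 wtop) (by omega)
  · subst hu2
    rw [desc_two hk, dd_PP, ddp_eq_lt (by omega)]
    exact walk_cast wtop (by simp)
  · rcases Nat.lt_or_ge u k with hu3 | hu3
    · rw [desc_A hk hu2 hu3, dd_AP]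
      have w1 : (Ctilde k p q).Walk u 2 1 :=
        walk_one eA_mem (mem_eA (by omega)) (mem_eA (by omega)) (by omega)
      exact walk_cast (walk_append w1 wtop) (by omega)
    · have w1 : (Ctilde k p q).Walk u 0 1 :=
        walk_one eB_mem (mem_eB (Or.inr (Or.inr ⟨hu3, hu⟩))) (mem_eB (Or.inl rfl)) (by omega)
      have w2 : (Ctilde k p q).Walk 0 2 1 :=
        walk_one eA_mem (mem_eA (by omega)) (mem_eA (by omega)) (by omega)
      have w := walk_append w1 (walk_append w2 wtop)
      rcases Nat.eq_or_lt_of_le hu3 with rfl | hu4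
      · rw [desc_k hk, dd_QP]
        exact walk_cast w (by omega)
      · rw [desc_B hk hu4 hu, dd_BP]
        exact walk_cast w (by omega)

lemma walk_cycQ {u j x : ℕ} (hu : u < 2 * k - 2) (hj : j < q)
    (h1 : 2 * k - 2 + p * (k - 1) + j * (k - 1) ≤ x)
    (h2 : x < 2 * k - 2 + p * (k - 1) + (j + 1) * (k - 1)) :
    (Ctilde k p q).Walk u x (dd (desc k p q u) (desc k p q x)) := by
  rw [descQ_of_Ico hk hj h1 h2]
  have wtop : (Ctilde k p q).Walk k x (j + 1) := walk_k_Q hk hj h1 h2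
  rcases Nat.lt_trichotomy u k with hu3 | rfl | hu3
  · rcases Nat.lt_trichotomy u 2 with hu2 | hu2 | hu2
    · rw [desc_S hk hu2, dd_SQ]
      have w1 : (Ctilde k p q).Walk u k 1 :=
        walk_one eB_mem (mem_eB (by omega)) (mem_eB (Or.inr (Or.inr ⟨le_refl _, by omega⟩)))
          (by omega)
      exact walk_cast (walk_append w1 wtop) (by omega)
    · subst hu2
      rw [desc_two hk, dd_PQ]
      have w1 : (Ctilde k p q).Walk 2 0 1 :=
        walk_one eA_mem (mem_eA (by omega)) (mem_eA (by omega)) (by omega)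
      have w2 : (Ctilde k p q).Walk 0 k 1 :=
        walk_one eB_mem (mem_eB (Or.inl rfl)) (mem_eB (Or.inr (Or.inr ⟨le_refl _, by omega⟩)))
          (by omega)
      exact walk_cast (walk_append w1 (walk_append w2 wtop)) (by omega)
    · rw [desc_A hk hu2 hu3, dd_AQ]
      have w1 : (Ctilde k p q).Walk u 0 1 :=
        walk_one eA_mem (mem_eA (by omega)) (mem_eA (by omega)) (by omega)
      have w2 : (Ctilde k p q).Walk 0 k 1 :=
        walk_one eB_mem (mem_eB (Or.inl rfl)) (mem_eB (Or.inr (Or.inr ⟨le_refl _, by omega⟩)))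
          (by omega)
      exact walk_cast (walk_append w1 (walk_append w2 wtop)) (by omega)
  · rw [desc_k hk, dd_QQ, ddp_eq_lt (by omega)]
    exact walk_cast wtop (by simp)
  · rw [desc_B hk hu3 hu, dd_BQ]
    have w1 : (Ctilde k p q).Walk u k 1 :=
      walk_one eB_mem (mem_eB (Or.inr (Or.inr ⟨by omega, hu⟩)))
        (mem_eB (Or.inr (Or.inr ⟨le_refl _, by omega⟩))) (by omega)
    exact walk_cast (walk_append w1 wtop) (by omega)

lemma walk_cyccyc {u v : ℕ} (hu : u < 2 * k - 2) (hv : v < 2 * k - 2) (huv : u ≠ v) :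
    (Ctilde k p q).Walk u v (dd (desc k p q u) (desc k p q v)) := by
  by_cases hA : u < k ∧ v < k
  · rw [dd_coedge (coedge_of_mem hk eA_mem (mem_eA hA.1) (mem_eA hA.2))]
    exact walk_one eA_mem (mem_eA hA.1) (mem_eA hA.2) huv
  · by_cases hB : (u < 2 ∨ k ≤ u) ∧ (v < 2 ∨ k ≤ v)
    · have hu' : u ∈ eB k := mem_eB (by omega)
      have hv' : v ∈ eB k := mem_eB (by omega)
      rw [dd_coedge (coedge_of_mem hk eB_mem hu' hv')]
      exact walk_one eB_mem hu' hv' huv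
    · -- mixed: one strictly inside A-side [2,k), the other in B-side [k, 2k-2)
      rcases Nat.lt_or_ge u k with huk | huk
      · -- u ∈ [2,k) side (since not both <k, v ≥ k; and if u<2 then hB would hold)
        have hvk : k ≤ v := by omega
        have hu2 : 2 ≤ u := by omega
        have w1 : (Ctilde k p q).Walk u 0 1 :=
          walk_one eA_mem (mem_eA (by omega)) (mem_eA (by omega)) (by omega)
        have w2 : (Ctilde k p q).Walk 0 v 1 :=
          walk_one eB_mem (mem_eB (Or.inl rfl)) (mem_eB (by omega)) (by omega)
        have w := walk_append w1 w2
        have hdd : dd (desc k p q u) (desc k p q v) = 2 := by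
          rcases Nat.eq_or_lt_of_le hu2 with rfl | hu2'
          · rw [desc_two hk]
            rcases Nat.eq_or_lt_of_le hvk with rfl | hv2'
            · rw [desc_k hk, dd_PQ]
            · rw [desc_B hk hv2' hv, dd_PB]
          · rw [desc_A hk hu2' huk]
            rcases Nat.eq_or_lt_of_le hvk with rfl | hv2'
            · rw [desc_k hk, dd_AQ]
            · rw [desc_B hk hv2' hv, dd_AB]
        rw [hdd]
        exact w
      · have hvk : v < k := by omega
        have hv2 : 2 ≤ v := by omega
        have w1 : (Ctilde k p q).Walk u 0 1 :=
          walk_one eB_mem (mem_eB (by omega)) (mem_eB (Or.inl rfl)) (by omega)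
        have w2 : (Ctilde k p q).Walk 0 v 1 :=
          walk_one eA_mem (mem_eA (by omega)) (mem_eA (by omega)) (by omega)
        have w := walk_append w1 w2
        have hdd : dd (desc k p q u) (desc k p q v) = 2 := by
          rcases Nat.eq_or_lt_of_le huk with rfl | hu2'
          · rw [desc_k hk]
            rcases Nat.eq_or_lt_of_le hv2 with rfl | hv2'
            · rw [desc_two hk, dd_QP]
            · rw [desc_A hk hv2' hvk, dd_QA]
          · rw [desc_B hk hu2' hu]
            rcases Nat.eq_or_lt_of_le hv2 with rfl | hv2'
            · rw [desc_two hk, dd_BP]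
            · rw [desc_A hk hv2' hvk, dd_BA]
        rw [hdd]
        exact w

lemma walk_PP {i i' u v : ℕ} (hii : i ≤ i') (hi' : i' < p)
    (hu1 : 2 * k - 2 + i * (k - 1) ≤ u) (hu2 : u < 2 * k - 2 + (i + 1) * (k - 1))
    (hv1 : 2 * k - 2 + i' * (k - 1) ≤ v) (hv2 : v < 2 * k - 2 + (i' + 1) * (k - 1))
    (huv : u ≠ v) :
    (Ctilde k p q).Walk u v (dd (desc k p q u) (desc k p q v)) := by
  rw [descP_of_Ico hk (by omega) hu1 hu2, descP_of_Ico hk hi' hv1 hv2, dd_PP]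
  rcases Nat.eq_or_lt_of_le hii with rfl | hlt
  · rw [ddp_eq_same rfl]
    exact walk_one (eP_mem hi') (Ico_subset_eP hu1 hu2) (Ico_subset_eP hv1 hv2) huv
  · rw [ddp_eq_lt (by omega)]
    have hstep : i + 1 < p := by omega
    have hexp : (i + 1) * (k - 1) = i * (k - 1) + (k - 1) := by ring
    have hsum : i + 1 + (i' - (i + 1)) = i' := by omega
    have wdown : (Ctilde k p q).Walk (jointP k (i + 1)) v (i' - (i + 1) + 1) := by
      refine walkP' hk (i' - (i + 1)) (i + 1) (by omega) v ?_ ?_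
      · rw [hsum]; exact hv1
      · rw [hsum]; exact hv2
    by_cases htop : u = 2 * k - 2 + (i + 1) * (k - 1) - 1
    · have hflag : u - (2 + i) * (k - 1) = k - 2 ∧ i + 1 < p := by
        have h6 := expand_base (k := k) i
        exact ⟨by omega, hstep⟩
      rw [decide_eq_true hflag, if_pos rfl]
      have hj : u = jointP k (i + 1) := by
        unfold jointP; rw [if_neg (by omega)]; omega
      rw [hj]
      exact walk_cast wdown (by omega)
    · have hflag : ¬(u - (2 + i) * (k - 1) = k - 2 ∧ i + 1 < p) := by
        rintro ⟨hc, -⟩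
        apply htop
        have h6 := expand_base (k := k) i
        omega
      rw [decide_eq_false hflag, if_neg (by simp)]
      have hjmem := jointP_succ_mem_Ico (k := k) hk i
      have w1 : (Ctilde k p q).Walk u (jointP k (i + 1)) 1 := by
        refine walk_one (eP_mem (by omega : i < p)) (Ico_subset_eP hu1 hu2)
          (Ico_subset_eP hjmem.1 hjmem.2) ?_
        unfold jointP
        rw [if_neg (by omega)]
        have h6 := expand_base (k := k) i
        omega
      exact walk_cast (walk_append w1 wdown) (by omega)

lemma walk_QQ {j j' u v : ℕ} (hjj : j ≤ j') (hj' : j' < q)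
    (hu1 : 2 * k - 2 + p * (k - 1) + j * (k - 1) ≤ u)
    (hu2 : u < 2 * k - 2 + p * (k - 1) + (j + 1) * (k - 1))
    (hv1 : 2 * k - 2 + p * (k - 1) + j' * (k - 1) ≤ v)
    (hv2 : v < 2 * k - 2 + p * (k - 1) + (j' + 1) * (k - 1))
    (huv : u ≠ v) :
    (Ctilde k p q).Walk u v (dd (desc k p q u) (desc k p q v)) := by
  rw [descQ_of_Ico hk (by omega) hu1 hu2, descQ_of_Ico hk hj' hv1 hv2, dd_QQ]
  rcases Nat.eq_or_lt_of_le hjj with rfl | hlt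
  · rw [ddp_eq_same rfl]
    exact walk_one (eQ_mem hj') (Ico_subset_eQ hu1 hu2) (Ico_subset_eQ hv1 hv2) huv
  · rw [ddp_eq_lt (by omega)]
    have hstep : j + 1 < q := by omega
    have hexp : (j + 1) * (k - 1) = j * (k - 1) + (k - 1) := by ring
    have hsum : j + 1 + (j' - (j + 1)) = j' := by omega
    have wdown : (Ctilde k p q).Walk (jointQ k p (j + 1)) v (j' - (j + 1) + 1) := by
      refine walkQ' hk (j' - (j + 1)) (j + 1) (by omega) v ?_ ?_
      · rw [hsum]; exact hv1
      · rw [hsum]; exact hv2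
    have hkey : ∀ n : ℕ, 2 * k - 2 + p * (k - 1) + n * (k - 1) = (2 + p + n) * (k - 1) := by
      intro n; rw [Nat.add_mul, Nat.add_mul]; omega
    by_cases htop : u = 2 * k - 2 + p * (k - 1) + (j + 1) * (k - 1) - 1
    · have hflag : u - (2 + p + j) * (k - 1) = k - 2 ∧ j + 1 < q := by
        have h6 := hkey j
        have h7 := hkey (j + 1)
        exact ⟨by omega, hstep⟩
      rw [decide_eq_true hflag, if_pos rfl]
      have hj : u = jointQ k p (j + 1) := by
        unfold jointQ; rw [if_neg (by omega)]; omega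
      rw [hj]
      exact walk_cast wdown (by omega)
    · have hflag : ¬(u - (2 + p + j) * (k - 1) = k - 2 ∧ j + 1 < q) := by
        rintro ⟨hc, -⟩
        apply htop
        have h6 := hkey j
        have h7 := hkey (j + 1)
        omega
      rw [decide_eq_false hflag, if_neg (by simp)]
      have hjmem := jointQ_succ_mem_Ico (k := k) (p := p) hk j
      have w1 : (Ctilde k p q).Walk u (jointQ k p (j + 1)) 1 := by
        refine walk_one (eQ_mem (by omega : j < q)) (Ico_subset_eQ hu1 hu2)
          (Ico_subset_eQ hjmem.1 hjmem.2) ?_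
        unfold jointQ
        rw [if_neg (by omega)]
        omega
      exact walk_cast (walk_append w1 wdown) (by omega)

lemma walk_PQ {i j u v : ℕ} (hi : i < p) (hj : j < q)
    (hu1 : 2 * k - 2 + i * (k - 1) ≤ u) (hu2 : u < 2 * k - 2 + (i + 1) * (k - 1))
    (hv1 : 2 * k - 2 + p * (k - 1) + j * (k - 1) ≤ v)
    (hv2 : v < 2 * k - 2 + p * (k - 1) + (j + 1) * (k - 1)) :
    (Ctilde k p q).Walk u v (dd (desc k p q u) (desc k p q v)) := by
  rw [descP_of_Ico hk hi hu1 hu2, descQ_of_Ico hk hj hv1 hv2, dd_PQ]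
  have w1 : (Ctilde k p q).Walk u 2 (i + 1) := walk_symm (walk_two_P hk hi hu1 hu2)
  have w2 : (Ctilde k p q).Walk 2 0 1 :=
    walk_one eA_mem (mem_eA (by omega)) (mem_eA (by omega)) (by omega)
  have w3 : (Ctilde k p q).Walk 0 k 1 :=
    walk_one eB_mem (mem_eB (Or.inl rfl)) (mem_eB (Or.inr (Or.inr ⟨le_refl _, by omega⟩)))
      (by omega)
  have w4 : (Ctilde k p q).Walk k v (j + 1) := walk_k_Q hk hj hv1 hv2
  exact walk_cast (walk_append w1 (walk_append w2 (walk_append w3 w4))) (by omega)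

lemma buildWalk {u v : ℕ} (hu : u < (p + q + 2) * (k - 1)) (hv : v < (p + q + 2) * (k - 1))
    (huv : u ≠ v) :
    (Ctilde k p q).Walk u v (dd (desc k p q u) (desc k p q v)) := by
  rcases pos_cases hk hu with hu' | ⟨i, hi, hu1, hu2⟩ | ⟨j, hj, hu1, hu2⟩ <;>
    rcases pos_cases hk hv with hv' | ⟨i', hi', hv1, hv2⟩ | ⟨j', hj', hv1, hv2⟩
  · exact walk_cyccyc hk hu' hv' huv
  · exact walk_cycP hk hu' hi' hv1 hv2
  · exact walk_cycQ hk hu' hj' hv1 hv2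
  · rw [dd_comm]
    exact walk_symm (walk_cycP hk hv' hi hu1 hu2)
  · rcases le_or_gt i i' with h | h
    · exact walk_PP hk h hi' hu1 hu2 hv1 hv2 huv
    · rw [dd_comm]
      exact walk_symm (walk_PP hk (by omega : i' ≤ i) hi hv1 hv2 hu1 hu2 huv.symm)
  · exact walk_PQ hk hi hj' hu1 hu2 hv1 hv2
  · rw [dd_comm]
    exact walk_symm (walk_cycQ hk hv' hj hu1 hu2)
  · rw [dd_comm]
    exact walk_symm (walk_PQ hk hi' hj hv1 hv2 hu1 hu2)
  · rcases le_or_gt j j' with h | h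
    · exact walk_QQ hk h hj' hu1 hu2 hv1 hv2 huv
    · rw [dd_comm]
      exact walk_symm (walk_QQ hk (by omega : j' ≤ j) hj hv1 hv2 hu1 hu2 huv.symm)

lemma dist_eq {u v : ℕ} (hu : u < (p + q + 2) * (k - 1)) (hv : v < (p + q + 2) * (k - 1)) :
    (Ctilde k p q).dist u v = Dfun k p q u v := by
  by_cases huv : u = v
  · subst huv
    unfold FinHypergraph.dist Dfun
    rw [if_pos rfl]
    exact Nat.sInf_eq_zero.2 (Or.inl (Walk.nil u))
  · have w := buildWalk hk hu hv huv
    have hD : Dfun k p q u v = dd (desc k p q u) (desc k p q v) := if_neg huv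
    apply le_antisymm
    · rw [hD]
      exact Nat.sInf_le w
    · have hne : {L | (Ctilde k p q).Walk u v L}.Nonempty := ⟨_, w⟩
      exact walk_le hk (Nat.sInf_mem hne)

end Params4

lemma ddp_shift (a b : ℕ) (ta tb : Bool) : ddp (a + 1) ta (b + 1) tb = ddp a ta b tb := by
  unfold ddp
  split_ifs <;> omega

section Params5
open FinHypergraph Finset

variable {k p q : ℕ} (hk : 3 ≤ k) (hp : 1 ≤ p) (hq2 : 2 ≤ q)

/-- descriptors occurring among the first `(2+p)*(k-1)` vertices -/
def RDesc (p : ℕ) (d : Desc) : Prop :=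
  d = .S ∨ d = .A ∨ d = .B ∨ d = .Q 0 true ∨ ∃ b t, d = .P b t ∧ b ≤ p

include hk

omit hk in
lemma m1_le_N : (2 + p) * (k - 1) ≤ (p + q + 2) * (k - 1) :=
  Nat.mul_le_mul_right _ (by omega)

lemma desc2_eq_desc1 {x : ℕ} (hx : x < (2 + p) * (k - 1) - 1) :
    desc k (p + 1) (q - 1) x = desc k p q x := by
  have hxN : x < (p + q + 2) * (k - 1) := by have := m1_le_N (k := k) (p := p) (q := q); omega
  rcases pos_cases hk hxN with h | ⟨i, hi, h1, h2⟩ | ⟨j, hj, h1, h2⟩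
  · rcases Nat.lt_trichotomy x 2 with h2 | rfl | h2
    · rw [desc_S hk h2, desc_S hk h2]
    · rw [desc_two hk, desc_two hk]
    · rcases Nat.lt_trichotomy x k with h3 | rfl | h3
      · rw [desc_A hk h2 h3, desc_A hk h2 h3]
      · rw [desc_k hk, desc_k hk]
      · rw [desc_B hk h3 h, desc_B hk h3 h]
  · rw [descP_of_Ico hk hi h1 h2, descP_of_Ico (p := p + 1) (q := q - 1) hk (by omega) h1 h2]
    congr 1
    apply decide_eq_decide.mpr
    have hA := expand_base (k := k) i
    have hB : (i + 1) * (k - 1) = i * (k - 1) + (k - 1) := by ring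
    constructor
    · rintro ⟨hs, -⟩
      refine ⟨hs, ?_⟩
      by_contra hge
      have hip : p = i + 1 := by omega
      subst hip
      have hC : (2 + (i + 1)) * (k - 1) = (2 + i) * (k - 1) + (k - 1) := by ring
      omega
    · rintro ⟨hs, hlt⟩
      exact ⟨hs, by omega⟩
  · exfalso
    have hA := expand_base (k := k) p
    have h0 : (0:ℕ) ≤ j * (k - 1) := Nat.zero_le _
    omega

include hp

lemma desc1_x1 : desc k p q ((2 + p) * (k - 1) - 1) = .P p false := by
  have e0 : 2 + p = 2 + (p - 1) + 1 := by omega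
  have e : (2 + (p - 1) + 1) * (k - 1) = (2 + (p - 1)) * (k - 1) + (k - 1) := by ring
  rw [e0, show (2 + (p - 1) + 1) * (k - 1) - 1 = (2 + (p - 1)) * (k - 1) + (k - 2) by omega]
  rw [desc_P hk (by omega) (by omega)]
  rw [show p - 1 + 1 = p by omega, decide_eq_false (by rintro ⟨-, h⟩; omega)]

lemma desc2_x1 : desc k (p + 1) (q - 1) ((2 + p) * (k - 1) - 1) = .P p true := by
  have e0 : 2 + p = 2 + (p - 1) + 1 := by omega
  have e : (2 + (p - 1) + 1) * (k - 1) = (2 + (p - 1)) * (k - 1) + (k - 1) := by ring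
  rw [e0, show (2 + (p - 1) + 1) * (k - 1) - 1 = (2 + (p - 1)) * (k - 1) + (k - 2) by omega]
  rw [desc_P (p := p + 1) (q := q - 1) hk (by omega) (by omega)]
  rw [show p - 1 + 1 = p by omega, decide_eq_true (by exact ⟨rfl, by omega⟩)]

omit hp

include hq2

lemma desc1_first {s : ℕ} (hs : s < k - 1) :
    desc k p q ((2 + p) * (k - 1) + s) = .Q 1 (decide (s = k - 2 ∧ 1 < q)) := by
  have h := desc_Q (p := p) (q := q) hk (j := 0) (by omega) hs
  rw [show (2 : ℕ) + p + 0 = 2 + p by omega] at h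
  rw [h]

omit hq2 in
lemma desc2_first {s : ℕ} (hs : s < k - 1) :
    desc k (p + 1) (q - 1) ((2 + p) * (k - 1) + s) = .P (p + 1) false := by
  have h := desc_P (p := p + 1) (q := q - 1) hk (i := p) (by omega) hs
  rw [h, decide_eq_false (by rintro ⟨-, h2⟩; omega)]

omit hq2 in
lemma desc1_later {j s : ℕ} (hj1 : 1 ≤ j) (hj : j < q) (hs : s < k - 1) :
    desc k p q ((2 + p + j) * (k - 1) + s) = .Q (j + 1) (decide (s = k - 2 ∧ j + 1 < q)) :=
  desc_Q hk hj hs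

lemma desc2_later {j s : ℕ} (hj1 : 1 ≤ j) (hj : j < q) (hs : s < k - 1) :
    desc k (p + 1) (q - 1) ((2 + p + j) * (k - 1) + s) =
      .Q j (decide (s = k - 2 ∧ j + 1 < q)) := by
  have h := desc_Q (p := p + 1) (q := q - 1) hk (j := j - 1) (by omega) hs
  rw [show (2 : ℕ) + (p + 1) + (j - 1) = 2 + p + j by omega] at h
  rw [h, show j - 1 + 1 = j by omega]
  congr 1
  apply decide_eq_decide.mpr
  constructor
  · rintro ⟨h1, h2⟩; exact ⟨h1, by omega⟩
  · rintro ⟨h1, h2⟩; exact ⟨h1, by omega⟩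

omit hq2

lemma RDesc_desc1 {u : ℕ} (hu : u < (2 + p) * (k - 1)) : RDesc p (desc k p q u) := by
  have huN : u < (p + q + 2) * (k - 1) := by have := m1_le_N (k := k) (p := p) (q := q); omega
  rcases pos_cases hk huN with h | ⟨i, hi, h1, h2⟩ | ⟨j, hj, h1, h2⟩
  · rcases Nat.lt_trichotomy u 2 with h2 | rfl | h2
    · rw [desc_S hk h2]; exact Or.inl rfl
    · rw [desc_two hk]; exact Or.inr (Or.inr (Or.inr (Or.inr ⟨0, true, rfl, by omega⟩)))
    · rcases Nat.lt_trichotomy u k with h3 | rfl | h3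
      · rw [desc_A hk h2 h3]; exact Or.inr (Or.inl rfl)
      · rw [desc_k hk]; exact Or.inr (Or.inr (Or.inr (Or.inl rfl)))
      · rw [desc_B hk h3 h]; exact Or.inr (Or.inr (Or.inl rfl))
  · rw [descP_of_Ico hk hi h1 h2]
    exact Or.inr (Or.inr (Or.inr (Or.inr ⟨i + 1, _, rfl, by omega⟩)))
  · exfalso
    have hA := expand_base (k := k) p
    have h0 : (0:ℕ) ≤ j * (k - 1) := Nat.zero_le _
    omega

include hp in
lemma RDesc_desc2 {u : ℕ} (hu : u < (2 + p) * (k - 1)) :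
    RDesc p (desc k (p + 1) (q - 1) u) := by
  by_cases hx : u = (2 + p) * (k - 1) - 1
  · subst hx
    rw [desc2_x1 hk hp]
    exact Or.inr (Or.inr (Or.inr (Or.inr ⟨p, true, rfl, le_refl _⟩)))
  · rw [desc2_eq_desc1 hk (by omega)]
    exact RDesc_desc1 hk hu

omit hk

/-- column `x₁`: the flag of `P p` is invisible from `RDesc` -/
lemma FcolA {d : Desc} (hd : RDesc p d) (t t' : Bool) : dd d (.P p t) = dd d (.P p t') := by
  rcases hd with rfl | rfl | rfl | rfl | ⟨b, tb, rfl, hb⟩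
  · rfl
  · rfl
  · rfl
  · rfl
  · rw [dd_PP, dd_PP]
    rcases Nat.eq_or_lt_of_le hb with rfl | hlt
    · rw [ddp_eq_same rfl, ddp_eq_same rfl]
    · rw [ddp_eq_lt hlt, ddp_eq_lt hlt]

lemma FcolQ1 {d : Desc} (hd : RDesc p d) (t : Bool) : dd d (.Q 1 t) = dd d (.Q 1 false) := by
  rcases hd with rfl | rfl | rfl | rfl | ⟨b, tb, rfl, hb⟩
  · rfl
  · rfl
  · rfl
  · rw [dd_QQ, dd_QQ, ddp_eq_lt (by omega), ddp_eq_lt (by omega)]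
  · rfl

lemma FcolQstep {d : Desc} (hd : RDesc p d) {j : ℕ} (hj : 1 ≤ j) (t t' : Bool) :
    dd d (.Q (j + 1) t') = dd d (.Q j t) + 1 := by
  rcases hd with rfl | rfl | rfl | rfl | ⟨b, tb, rfl, hb⟩
  · rw [dd_SQ, dd_SQ]
  · rw [dd_AQ, dd_AQ]
  · rw [dd_BQ, dd_BQ]
  · rw [dd_QQ, dd_QQ, ddp_eq_lt (by omega), ddp_eq_lt (by omega)]
    simp
  · rw [dd_PQ, dd_PQ]
    omega

end Params5

/-- pointwise difference of dd between the two parameterizations -/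
def Fv (k p q u v : ℕ) : ℤ :=
  (dd (desc k (p + 1) (q - 1) u) (desc k (p + 1) (q - 1) v) : ℤ) -
    (dd (desc k p q u) (desc k p q v) : ℤ)

/-- the column value for the moved-edge region -/
def Cv (k p q u : ℕ) : ℤ :=
  (dd (desc k (p + 1) (q - 1) u) (.P (p + 1) false) : ℤ) -
    (dd (desc k p q u) (.Q 1 false) : ℤ)

section Params6
open FinHypergraph Finset

variable {k p q : ℕ} (hk : 3 ≤ k) (hp : 1 ≤ p) (hq2 : 2 ≤ q)

omit hk hp hq2 in
lemma Fv_symm (u v : ℕ) : Fv k p q u v = Fv k p q v u := by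
  unfold Fv
  rw [dd_comm, dd_comm (desc k p q u)]

include hk hp

lemma V1 {u v : ℕ} (hu : u < (2 + p) * (k - 1)) (hv : v < (2 + p) * (k - 1)) :
    Fv k p q u v = 0 := by
  unfold Fv
  by_cases hu1 : u = (2 + p) * (k - 1) - 1
  · by_cases hv1 : v = (2 + p) * (k - 1) - 1
    · subst hu1; subst hv1
      rw [desc1_x1 hk hp, desc2_x1 hk hp, dd_PP, dd_PP, ddp_eq_same rfl, ddp_eq_same rfl]
      ring
    · subst hu1
      rw [desc1_x1 hk hp, desc2_x1 hk hp, desc2_eq_desc1 hk (by omega),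
        dd_comm, dd_comm (Desc.P p false)]
      rw [FcolA (RDesc_desc1 hk hv) true false]
      ring
  · by_cases hv1 : v = (2 + p) * (k - 1) - 1
    · subst hv1
      rw [desc1_x1 hk hp, desc2_x1 hk hp, desc2_eq_desc1 hk (by omega)]
      rw [FcolA (RDesc_desc1 hk hu) true false]
      ring
    · rw [desc2_eq_desc1 hk (by omega), desc2_eq_desc1 hk (by omega)]
      ring

omit hp

include hq2 in
lemma V2 {u s : ℕ} (hu : u < (2 + p) * (k - 1)) (hs : s < k - 1) (hp : 1 ≤ p) :
    Fv k p q u ((2 + p) * (k - 1) + s) = Cv k p q u := by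
  unfold Fv Cv
  rw [desc2_first hk hs, desc1_first hk hq2 hs, FcolQ1 (RDesc_desc1 hk hu)]

lemma V3 {u j s : ℕ} (hu : u < (2 + p) * (k - 1)) (hj1 : 1 ≤ j) (hj : j < q)
    (hs : s < k - 1) (hp : 1 ≤ p) (hq2 : 2 ≤ q) :
    Fv k p q u ((2 + p + j) * (k - 1) + s) = -1 := by
  unfold Fv
  rw [desc1_later hk hj1 hj hs, desc2_later hk hq2 hj1 hj hs]
  have hdu : dd (desc k (p + 1) (q - 1) u) (.Q j (decide (s = k - 2 ∧ j + 1 < q)))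
      = dd (desc k p q u) (.Q j (decide (s = k - 2 ∧ j + 1 < q))) := by
    by_cases hu1 : u = (2 + p) * (k - 1) - 1
    · subst hu1
      rw [desc1_x1 hk hp, desc2_x1 hk hp, dd_PQ, dd_PQ]
    · rw [desc2_eq_desc1 hk (by omega)]
  rw [hdu, FcolQstep (RDesc_desc1 hk hu) hj1 (decide (s = k - 2 ∧ j + 1 < q))]
  push_cast
  ring

include hq2 in
lemma V4 {s s' : ℕ} (hs : s < k - 1) (hs' : s' < k - 1) :
    Fv k p q ((2 + p) * (k - 1) + s) ((2 + p) * (k - 1) + s') = 0 := by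
  unfold Fv
  rw [desc2_first hk hs, desc2_first hk hs', desc1_first hk hq2 hs, desc1_first hk hq2 hs',
    dd_PP, dd_QQ, ddp_eq_same rfl, ddp_eq_same rfl]
  ring

include hq2 in
lemma V5 {s j s' : ℕ} (hs : s < k - 1) (hj1 : 1 ≤ j) (hj : j < q) (hs' : s' < k - 1) :
    Fv k p q ((2 + p) * (k - 1) + s) ((2 + p + j) * (k - 1) + s') =
      ((p : ℤ) + 3) - (if s = k - 2 then 0 else 1) := by
  unfold Fv
  rw [desc2_first hk hs, desc1_first hk hq2 hs, desc2_later hk hq2 hj1 hj hs',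
    desc1_later hk hj1 hj hs', dd_PQ, dd_QQ, ddp_eq_lt (show 1 < j + 1 by omega)]
  by_cases hs2 : s = k - 2
  · rw [if_pos hs2]
    have hd : decide (s = k - 2 ∧ 1 < q) = true := decide_eq_true ⟨hs2, by omega⟩
    rw [hd]
    simp only [if_true]
    push_cast
    omega
  · rw [if_neg hs2]
    have hd : decide (s = k - 2 ∧ 1 < q) = false := by
      apply decide_eq_false
      rintro ⟨h1, -⟩
      exact hs2 h1
    rw [hd]
    simp only [Bool.false_eq_true, if_false]
    push_cast
    omega

include hq2 in
lemma V6 {j s j' s' : ℕ} (hj1 : 1 ≤ j) (hj : j < q) (hs : s < k - 1)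
    (hj1' : 1 ≤ j') (hj' : j' < q) (hs' : s' < k - 1) :
    Fv k p q ((2 + p + j) * (k - 1) + s) ((2 + p + j') * (k - 1) + s') = 0 := by
  unfold Fv
  rw [desc2_later hk hq2 hj1 hj hs, desc1_later hk hj1 hj hs,
    desc2_later hk hq2 hj1' hj' hs', desc1_later hk hj1' hj' hs',
    dd_QQ, dd_QQ, ddp_shift]
  ring

end Params6

section SumTools
open Finset

lemma sum_Ico_eq_range' (h : ℕ → ℤ) (c w : ℕ) :
    ∑ x ∈ Ico c (c + w), h x = ∑ s ∈ range w, h (c + s) := by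
  rw [Finset.sum_Ico_eq_sum_range]
  simp

lemma sum_blocks (h : ℕ → ℤ) (c w : ℕ) (n : ℕ) :
    ∑ x ∈ Ico c (c + n * w), h x
      = ∑ i ∈ range n, ∑ x ∈ Ico (c + i * w) (c + (i + 1) * w), h x := by
  induction n with
  | zero => simp
  | succ n ih =>
    rw [Finset.sum_range_succ, ← ih]
    have h1 : c ≤ c + n * w := by omega
    have h2 : c + n * w ≤ c + (n + 1) * w := by
      have : (n + 1) * w = n * w + w := by ring
      omega
    rw [← Finset.sum_Ico_consecutive h h1 (show c + n * w ≤ c + (n + 1) * w from h2)]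

lemma sum_chi (w : ℕ) (hw : 1 ≤ w) :
    ∑ s ∈ range w, (if s = w - 1 then (0 : ℤ) else 1) = (w : ℤ) - 1 := by
  have he : ∀ s ∈ range w, (if s = w - 1 then (0 : ℤ) else 1)
      = 1 - (if s = w - 1 then (1 : ℤ) else 0) := by
    intro s _
    split_ifs <;> ring
  rw [Finset.sum_congr rfl he, Finset.sum_sub_distrib, Finset.sum_const,
    Finset.sum_ite_eq' (range w) (w - 1) (fun _ => (1 : ℤ))]
  rw [if_pos (Finset.mem_range.2 (by omega))]
  simp

end SumTools

section Params7
open FinHypergraph Finset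

variable {k p q : ℕ} (hk : 3 ≤ k) (hp : 1 ≤ p) (hq2 : 2 ≤ q)

omit hk hp hq2 in
lemma hNN_split (hq1 : 1 ≤ q) : (p + q + 2) * (k - 1)
    = (2 + p) * (k - 1) + (k - 1) + (q - 1) * (k - 1) := by
  rw [show p + q + 2 = 2 + p + 1 + (q - 1) by omega]
  ring

omit hk hp hq2 in
lemma base_later (j : ℕ) : (2 + p) * (k - 1) + (k - 1) + j * (k - 1)
    = (2 + p + (j + 1)) * (k - 1) := by ring

include hq2 in
omit hp in
/-- three-way split of a sum over all the vertices -/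
lemma split3 (h : ℕ → ℤ) :
    ∑ x ∈ range ((p + q + 2) * (k - 1)), h x
      = (∑ x ∈ range ((2 + p) * (k - 1)), h x)
        + (∑ s ∈ range (k - 1), h ((2 + p) * (k - 1) + s))
        + ∑ j ∈ range (q - 1), ∑ s ∈ range (k - 1), h ((2 + p + (j + 1)) * (k - 1) + s) := by
  rw [hNN_split (p := p) (q := q) (k := k) (by omega)]
  rw [← Finset.sum_range_add_sum_Ico h
    (show (2 + p) * (k - 1) + (k - 1) ≤ (2 + p) * (k - 1) + (k - 1) + (q - 1) * (k - 1) by omega)]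
  rw [← Finset.sum_range_add_sum_Ico h (show (2 + p) * (k - 1) ≤ (2 + p) * (k - 1) + (k - 1) by omega)]
  rw [sum_Ico_eq_range' h ((2 + p) * (k - 1)) (k - 1)]
  rw [sum_blocks h ((2 + p) * (k - 1) + (k - 1)) (k - 1) (q - 1)]
  congr 1
  apply Finset.sum_congr rfl
  intro j hj
  rw [show (2 + p) * (k - 1) + (k - 1) + (j + 1) * (k - 1)
      = ((2 + p) * (k - 1) + (k - 1) + j * (k - 1)) + (k - 1) by ring]
  rw [sum_Ico_eq_range' h ((2 + p) * (k - 1) + (k - 1) + j * (k - 1)) (k - 1)]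
  apply Finset.sum_congr rfl
  intro s hs
  rw [base_later]

include hk hp hq2

lemma RowR {u : ℕ} (hu : u < (2 + p) * (k - 1)) :
    ∑ v ∈ range ((p + q + 2) * (k - 1)), Fv k p q u v
      = ((k : ℤ) - 1) * Cv k p q u - ((k : ℤ) - 1) * ((q : ℤ) - 1) := by
  rw [split3 hq2]
  have e1 : ∑ v ∈ range ((2 + p) * (k - 1)), Fv k p q u v = 0 :=
    Finset.sum_eq_zero fun v hv => V1 hk hp hu (Finset.mem_range.1 hv)
  have e2 : ∑ s ∈ range (k - 1), Fv k p q u ((2 + p) * (k - 1) + s)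
      = ((k : ℤ) - 1) * Cv k p q u := by
    rw [Finset.sum_congr rfl fun s hs => V2 hk hq2 hu (Finset.mem_range.1 hs) hp,
      Finset.sum_const, Finset.card_range, nsmul_eq_mul]
    have hc : ((k - 1 : ℕ) : ℤ) = (k : ℤ) - 1 := by omega
    rw [hc]
  have e3 : ∑ j ∈ range (q - 1), ∑ s ∈ range (k - 1),
      Fv k p q u ((2 + p + (j + 1)) * (k - 1) + s) = -(((k : ℤ) - 1) * ((q : ℤ) - 1)) := by
    have inner : ∀ j ∈ range (q - 1), ∑ s ∈ range (k - 1),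
        Fv k p q u ((2 + p + (j + 1)) * (k - 1) + s) = -((k : ℤ) - 1) := by
      intro j hj
      rw [Finset.sum_congr rfl fun s hs =>
        V3 hk hu (by omega) (by have := Finset.mem_range.1 hj; omega)
          (Finset.mem_range.1 hs) hp hq2]
      rw [Finset.sum_const, Finset.card_range, nsmul_eq_mul]
      have : ((k - 1 : ℕ) : ℤ) = (k : ℤ) - 1 := by omega
      rw [this]; ring
    rw [Finset.sum_congr rfl inner, Finset.sum_const, Finset.card_range, nsmul_eq_mul]
    have : ((q - 1 : ℕ) : ℤ) = (q : ℤ) - 1 := by omega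
    rw [this]; ring
  rw [e1, e2, e3]
  ring

lemma RowF {s : ℕ} (hs : s < k - 1) :
    ∑ v ∈ range ((p + q + 2) * (k - 1)), Fv k p q ((2 + p) * (k - 1) + s) v
      = (∑ v ∈ range ((2 + p) * (k - 1)), Cv k p q v)
        + ((q : ℤ) - 1) * ((k : ℤ) - 1) * (((p : ℤ) + 3) - (if s = k - 2 then 0 else 1)) := by
  rw [split3 hq2]
  have e1 : ∑ v ∈ range ((2 + p) * (k - 1)), Fv k p q ((2 + p) * (k - 1) + s) v
      = ∑ v ∈ range ((2 + p) * (k - 1)), Cv k p q v := by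
    apply Finset.sum_congr rfl
    intro v hv
    rw [Fv_symm]
    exact V2 hk hq2 (Finset.mem_range.1 hv) hs hp
  have e2 : ∑ s' ∈ range (k - 1), Fv k p q ((2 + p) * (k - 1) + s) ((2 + p) * (k - 1) + s')
      = 0 :=
    Finset.sum_eq_zero fun s' hs' => V4 hk hq2 hs (Finset.mem_range.1 hs')
  have e3 : ∑ j ∈ range (q - 1), ∑ s' ∈ range (k - 1),
      Fv k p q ((2 + p) * (k - 1) + s) ((2 + p + (j + 1)) * (k - 1) + s')
      = ((q : ℤ) - 1) * ((k : ℤ) - 1) * (((p : ℤ) + 3) - (if s = k - 2 then 0 else 1)) := by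
    have inner : ∀ j ∈ range (q - 1), ∑ s' ∈ range (k - 1),
        Fv k p q ((2 + p) * (k - 1) + s) ((2 + p + (j + 1)) * (k - 1) + s')
        = ((k : ℤ) - 1) * (((p : ℤ) + 3) - (if s = k - 2 then 0 else 1)) := by
      intro j hj
      rw [Finset.sum_congr rfl fun s' hs' =>
        V5 hk hq2 hs (by omega) (by have := Finset.mem_range.1 hj; omega)
          (Finset.mem_range.1 hs')]
      rw [Finset.sum_const, Finset.card_range, nsmul_eq_mul]
      have : ((k - 1 : ℕ) : ℤ) = (k : ℤ) - 1 := by omega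
      rw [this]
    rw [Finset.sum_congr rfl inner, Finset.sum_const, Finset.card_range, nsmul_eq_mul]
    have : ((q - 1 : ℕ) : ℤ) = (q : ℤ) - 1 := by omega
    rw [this]; ring
  rw [e1, e2, e3]
  ring

lemma RowL {j s : ℕ} (hj1 : 1 ≤ j) (hj : j < q) (hs : s < k - 1) :
    ∑ v ∈ range ((p + q + 2) * (k - 1)), Fv k p q ((2 + p + j) * (k - 1) + s) v
      = -(((2 + p) * (k - 1) : ℕ) : ℤ)
        + (((k : ℤ) - 1) * ((p : ℤ) + 3) - ((k : ℤ) - 2)) := by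
  rw [split3 hq2]
  have e1 : ∑ v ∈ range ((2 + p) * (k - 1)), Fv k p q ((2 + p + j) * (k - 1) + s) v
      = -(((2 + p) * (k - 1) : ℕ) : ℤ) := by
    have hpt : ∀ v ∈ range ((2 + p) * (k - 1)),
        Fv k p q ((2 + p + j) * (k - 1) + s) v = (-1 : ℤ) := by
      intro v hv
      rw [Fv_symm]
      exact V3 hk (Finset.mem_range.1 hv) hj1 hj hs hp hq2
    rw [Finset.sum_congr rfl hpt, Finset.sum_const, Finset.card_range, nsmul_eq_mul]
    ring
  have e2 : ∑ s' ∈ range (k - 1),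
      Fv k p q ((2 + p + j) * (k - 1) + s) ((2 + p) * (k - 1) + s')
      = ((k : ℤ) - 1) * ((p : ℤ) + 3) - ((k : ℤ) - 2) := by
    have hpt : ∀ s' ∈ range (k - 1),
        Fv k p q ((2 + p + j) * (k - 1) + s) ((2 + p) * (k - 1) + s')
        = ((p : ℤ) + 3) - (if s' = k - 2 then 0 else 1) := by
      intro s' hs'
      rw [Fv_symm]
      exact V5 hk hq2 (Finset.mem_range.1 hs') hj1 hj hs
    rw [Finset.sum_congr rfl hpt]
    rw [Finset.sum_sub_distrib, Finset.sum_const, Finset.card_range, nsmul_eq_mul]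
    rw [show (k : ℕ) - 2 = k - 1 - 1 by omega, sum_chi (k - 1) (by omega)]
    have : ((k - 1 : ℕ) : ℤ) = (k : ℤ) - 1 := by omega
    rw [this]
    ring
  have e3 : ∑ j' ∈ range (q - 1), ∑ s' ∈ range (k - 1),
      Fv k p q ((2 + p + j) * (k - 1) + s) ((2 + p + (j' + 1)) * (k - 1) + s') = 0 := by
    apply Finset.sum_eq_zero
    intro j' hj'
    apply Finset.sum_eq_zero
    intro s' hs'
    exact V6 hk hq2 hj1 hj hs (by omega) (by have := Finset.mem_range.1 hj'; omega)
      (Finset.mem_range.1 hs')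
  rw [e1, e2, e3]
  ring

omit hp hq2 in
/-- value of `Cv` on the `P`-side intervals -/
lemma CvP {i s : ℕ} (hi : i < p) (hs : s < k - 1) :
    Cv k p q ((2 + i) * (k - 1) + s)
      = (p : ℤ) - 2 * i - 4 + (if s = k - 2 then 0 else 1) := by
  unfold Cv
  rw [desc_P hk hi hs, desc_P (p := p + 1) (q := q - 1) hk (by omega) hs,
    dd_PP, dd_PQ, ddp_eq_lt (show i + 1 < p + 1 by omega)]
  by_cases hs2 : s = k - 2
  · rw [if_pos hs2, decide_eq_true (show s = k - 2 ∧ i + 1 < p + 1 from ⟨hs2, by omega⟩)]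
    simp only [if_true]
    push_cast
    omega
  · rw [if_neg hs2, decide_eq_false (show ¬(s = k - 2 ∧ i + 1 < p + 1) from fun h => hs2 h.1)]
    simp only [Bool.false_eq_true, if_false]
    push_cast
    omega

omit hq2 in
lemma hbig : 6 ≤ (2 + p) * (k - 1) := by
  have h : 3 * 2 ≤ (2 + p) * (k - 1) := Nat.mul_le_mul (by omega) (by omega)
  omega

omit hq2 in
lemma Cv_S {v : ℕ} (hv : v < 2) : Cv k p q v = p := by
  have h6 := hbig hk hp
  have h7 : 3 * (k - 1) ≤ (2 + p) * (k - 1) := Nat.mul_le_mul_right _ (by omega)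
  unfold Cv
  rw [desc2_eq_desc1 hk (by omega), desc_S hk hv, dd_SP, dd_SQ]
  push_cast; ring

omit hq2 in
lemma Cv_two : Cv k p q 2 = (p : ℤ) - 2 := by
  have h6 := hbig hk hp
  have h7 : 3 * (k - 1) ≤ (2 + p) * (k - 1) := Nat.mul_le_mul_right _ (by omega)
  unfold Cv
  rw [desc2_eq_desc1 hk (by omega), desc_two hk, dd_PP, dd_PQ, ddp_eq_lt (by omega)]
  simp only [if_true]
  push_cast; omega

omit hq2 in
lemma Cv_A {v : ℕ} (h2 : 2 < v) (hv : v < k) : Cv k p q v = (p : ℤ) - 1 := by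
  have h6 := hbig hk hp
  have h7 : 3 * (k - 1) ≤ (2 + p) * (k - 1) := Nat.mul_le_mul_right _ (by omega)
  unfold Cv
  rw [desc2_eq_desc1 hk (by omega), desc_A hk h2 hv, dd_AP, dd_AQ]
  push_cast; ring

omit hq2 in
lemma Cv_k : Cv k p q k = (p : ℤ) + 2 := by
  have h6 := hbig hk hp
  have h7 : 3 * (k - 1) ≤ (2 + p) * (k - 1) := Nat.mul_le_mul_right _ (by omega)
  unfold Cv
  rw [desc2_eq_desc1 hk (by omega), desc_k hk, dd_QP, dd_QQ, ddp_eq_lt (by omega)]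
  simp only [if_true]
  push_cast; omega

omit hq2 in
lemma Cv_B {v : ℕ} (h2 : k < v) (hv : v < 2 * k - 2) : Cv k p q v = (p : ℤ) + 1 := by
  have h6 := hbig hk hp
  have h7 : 2 * k - 2 ≤ (2 + p) * (k - 1) - 1 := by
    have := expand_base (k := k) p
    have h8 : 1 * (k - 1) ≤ p * (k - 1) := Nat.mul_le_mul_right _ hp
    omega
  unfold Cv
  rw [desc2_eq_desc1 hk (by omega), desc_B hk h2 hv, dd_BP, dd_BQ]
  push_cast; ring

omit hq2 in
lemma Cv_cycle :
    ∑ v ∈ range (2 * k - 2), Cv k p q v = 2 * (p : ℤ) * ((k : ℤ) - 1) := by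
  rw [Finset.range_eq_Ico,
    ← Finset.sum_Ico_consecutive _ (show (0:ℕ) ≤ 2 by omega) (show (2:ℕ) ≤ 2*k-2 by omega),
    ← Finset.sum_Ico_consecutive _ (show (2:ℕ) ≤ 3 by omega) (show (3:ℕ) ≤ 2*k-2 by omega),
    ← Finset.sum_Ico_consecutive _ (show (3:ℕ) ≤ k by omega) (show k ≤ 2*k-2 by omega),
    ← Finset.sum_Ico_consecutive _ (show k ≤ k+1 by omega) (show k+1 ≤ 2*k-2 by omega)]
  have e1 : ∑ v ∈ Ico 0 2, Cv k p q v = 2 * (p : ℤ) := by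
    rw [Finset.sum_congr rfl fun v hv => Cv_S hk hp (Finset.mem_Ico.1 hv).2,
      Finset.sum_const, Nat.card_Ico, nsmul_eq_mul]
    norm_num
  have e2 : ∑ v ∈ Ico 2 3, Cv k p q v = (p : ℤ) - 2 := by
    rw [show (3:ℕ) = 2 + 1 from rfl, sum_Ico_eq_range', Finset.sum_range_one]
    exact Cv_two hk hp
  have e3 : ∑ v ∈ Ico 3 k, Cv k p q v = ((k : ℤ) - 3) * ((p : ℤ) - 1) := by
    rw [Finset.sum_congr rfl fun v hv => Cv_A hk hp
      (by have := (Finset.mem_Ico.1 hv).1; omega) (Finset.mem_Ico.1 hv).2,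
      Finset.sum_const, Nat.card_Ico, nsmul_eq_mul]
    congr 1
    omega
  have e4 : ∑ v ∈ Ico k (k+1), Cv k p q v = (p : ℤ) + 2 := by
    rw [sum_Ico_eq_range', Finset.sum_range_one, Nat.add_zero]
    exact Cv_k hk hp
  have e5 : ∑ v ∈ Ico (k+1) (2*k-2), Cv k p q v = ((k : ℤ) - 3) * ((p : ℤ) + 1) := by
    rw [Finset.sum_congr rfl fun v hv => Cv_B hk hp
      (by have := (Finset.mem_Ico.1 hv).1; omega) (Finset.mem_Ico.1 hv).2,
      Finset.sum_const, Nat.card_Ico, nsmul_eq_mul]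
    congr 1
    omega
  rw [e1, e2, e3, e4, e5]
  ring

omit hq2 in
lemma Cv_sum :
    ∑ v ∈ range ((2 + p) * (k - 1)), Cv k p q v = -(p : ℤ) := by
  have hexp := expand_base (k := k) p
  rw [show (2 + p) * (k - 1) = 2*k-2 + p * (k-1) from hexp.symm]
  rw [← Finset.sum_range_add_sum_Ico _ (show 2*k-2 ≤ 2*k-2 + p*(k-1) by omega)]
  rw [Cv_cycle hk hp, sum_blocks _ (2*k-2) (k-1) p]
  have inner : ∀ i ∈ range p, ∑ x ∈ Ico (2*k-2 + i*(k-1)) (2*k-2 + (i+1)*(k-1)), Cv k p q x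
      = ((k : ℤ) - 1) * ((p : ℤ) - 2*i - 4) + ((k : ℤ) - 2) := by
    intro i hi
    have hi' : i < p := Finset.mem_range.1 hi
    rw [show 2*k-2 + (i+1)*(k-1) = (2*k-2 + i*(k-1)) + (k-1) by
      have : (i+1)*(k-1) = i*(k-1) + (k-1) := by ring
      omega]
    rw [sum_Ico_eq_range']
    have hpt : ∀ s ∈ range (k-1), Cv k p q (2*k-2 + i*(k-1) + s)
        = (p : ℤ) - 2*i - 4 + (if s = k - 1 - 1 then 0 else 1) := by
      intro s hs
      rw [show 2*k-2 + i*(k-1) = (2+i)*(k-1) from expand_base i]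
      rw [CvP hk hi' (Finset.mem_range.1 hs), show k - 1 - 1 = k - 2 from by omega]
    rw [Finset.sum_congr rfl hpt, Finset.sum_add_distrib, Finset.sum_const,
      Finset.card_range, nsmul_eq_mul, sum_chi (k-1) (by omega)]
    have hc : ((k - 1 : ℕ) : ℤ) = (k : ℤ) - 1 := by omega
    rw [hc]
    ring
  rw [Finset.sum_congr rfl inner, Finset.sum_add_distrib, Finset.sum_const,
    Finset.card_range, nsmul_eq_mul, ← Finset.mul_sum]
  have hlin : ∀ i ∈ range p, (p : ℤ) - 2*i - 4 = ((p : ℤ) - 4) - 2 * (i : ℤ) := by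
    intro i _; ring
  rw [Finset.sum_congr rfl hlin, Finset.sum_sub_distrib, Finset.sum_const,
    Finset.card_range, nsmul_eq_mul, ← Finset.mul_sum]
  have hg : (∑ i ∈ range p, (i : ℤ)) * 2 = (p : ℤ) * ((p : ℤ) - 1) := by
    have h := Finset.sum_range_id_mul_two p
    have h2 := congrArg (Nat.cast : ℕ → ℤ) h
    push_cast [Nat.cast_sub hp] at h2
    linarith [h2]
  linear_combination (1 - (k : ℤ)) * hg

lemma sum_diff :
    ∑ u ∈ range ((p+q+2)*(k-1)), ∑ v ∈ range ((p+q+2)*(k-1)), Fv k p q u v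
      = 2 * ((k:ℤ) - 1) * ((q:ℤ) - (p:ℤ) - 1) := by
  rw [split3 hq2 (fun u => ∑ v ∈ range ((p+q+2)*(k-1)), Fv k p q u v)]
  have part1 : ∑ u ∈ range ((2+p)*(k-1)), ∑ v ∈ range ((p+q+2)*(k-1)), Fv k p q u v
      = ((k:ℤ)-1) * (-(p:ℤ)) - (((2+p)*(k-1) : ℕ) : ℤ) * (((k:ℤ)-1) * ((q:ℤ)-1)) := by
    rw [Finset.sum_congr rfl fun u hu => RowR hk hp hq2 (Finset.mem_range.1 hu),
      Finset.sum_sub_distrib, Finset.sum_const, Finset.card_range, nsmul_eq_mul,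
      ← Finset.mul_sum, Cv_sum hk hp]
  have part2 : ∑ s ∈ range (k-1), ∑ v ∈ range ((p+q+2)*(k-1)),
        Fv k p q ((2+p)*(k-1) + s) v
      = ((k:ℤ)-1) * (-(p:ℤ))
        + ((q:ℤ)-1) * ((k:ℤ)-1) * (((k:ℤ)-1) * ((p:ℤ)+3) - ((k:ℤ)-2)) := by
    rw [Finset.sum_congr rfl fun s hs => RowF hk hp hq2 (Finset.mem_range.1 hs),
      Finset.sum_add_distrib, Finset.sum_const, Finset.card_range, nsmul_eq_mul,
      Cv_sum hk hp, ← Finset.mul_sum, Finset.sum_sub_distrib, Finset.sum_const,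
      Finset.card_range, nsmul_eq_mul]
    rw [show (k:ℕ) - 2 = k - 1 - 1 by omega, sum_chi (k-1) (by omega)]
    have hc : ((k - 1 : ℕ) : ℤ) = (k : ℤ) - 1 := by omega
    rw [hc]
    ring
  have part3 : ∑ j ∈ range (q-1), ∑ s ∈ range (k-1), ∑ v ∈ range ((p+q+2)*(k-1)),
        Fv k p q ((2+p+(j+1))*(k-1) + s) v
      = ((q:ℤ)-1) * (((k:ℤ)-1) * (-(((2+p)*(k-1) : ℕ) : ℤ)
          + (((k:ℤ)-1) * ((p:ℤ)+3) - ((k:ℤ)-2)))) := by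
    have inner : ∀ j ∈ range (q-1), ∑ s ∈ range (k-1), ∑ v ∈ range ((p+q+2)*(k-1)),
        Fv k p q ((2+p+(j+1))*(k-1) + s) v
        = ((k:ℤ)-1) * (-(((2+p)*(k-1) : ℕ) : ℤ) + (((k:ℤ)-1)*((p:ℤ)+3) - ((k:ℤ)-2))) := by
      intro j hj
      rw [Finset.sum_congr rfl fun s hs => RowL hk hp hq2 (by omega)
        (by have := Finset.mem_range.1 hj; omega) (Finset.mem_range.1 hs),
        Finset.sum_const, Finset.card_range, nsmul_eq_mul]
      have hc : ((k - 1 : ℕ) : ℤ) = (k : ℤ) - 1 := by omega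
      rw [hc]
    rw [Finset.sum_congr rfl inner, Finset.sum_const, Finset.card_range, nsmul_eq_mul]
    have hc : ((q - 1 : ℕ) : ℤ) = (q : ℤ) - 1 := by omega
    rw [hc]
  rw [part1, part2, part3]
  have hm1 : (((2+p)*(k-1) : ℕ) : ℤ) = ((p:ℤ)+2) * ((k:ℤ)-1) := by
    push_cast [Nat.cast_sub (show 1 ≤ k by omega)]
    ring
  rw [hm1]
  ring

end Params7


section Final
open FinHypergraph Finset

variable {k p q : ℕ}

lemma Dfun_cast (hq1 : 1 ≤ q) (u v : ℕ) :
    ((Dfun k (p + 1) (q - 1) u v : ℕ) : ℤ) = ((Dfun k p q u v : ℕ) : ℤ) + Fv k p q u v := by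
  unfold Dfun Fv
  by_cases huv : u = v
  · rw [if_pos huv, if_pos huv, huv, dd_self, dd_self]
    ring
  · rw [if_neg huv, if_neg huv]
    ring

lemma main (hk : 3 ≤ k) (hp : 1 ≤ p) (hpq : p ≤ q - 2) :
    (Ctilde k (p + 1) (q - 1)).trans = (Ctilde k p q).trans + (k - 1) * (q - p - 1) := by
  have hq2 : 2 ≤ q := by omega
  have hq3 : p + 2 ≤ q := by omega
  have hNe : ((p + 1) + (q - 1) + 2) = p + q + 2 := by omega
  have hv2 : (Ctilde k (p + 1) (q - 1)).verts = Finset.range ((p + q + 2) * (k - 1)) := by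
    show Finset.range (((p + 1) + (q - 1) + 2) * (k - 1)) = _
    rw [hNe]
  have hv1 : (Ctilde k p q).verts = Finset.range ((p + q + 2) * (k - 1)) := rfl
  have hs1 : ∑ u ∈ Finset.range ((p + q + 2) * (k - 1)),
      ∑ v ∈ Finset.range ((p + q + 2) * (k - 1)), (Ctilde k p q).dist u v
      = ∑ u ∈ Finset.range ((p + q + 2) * (k - 1)),
        ∑ v ∈ Finset.range ((p + q + 2) * (k - 1)), Dfun k p q u v := by
    apply Finset.sum_congr rfl
    intro u hu
    apply Finset.sum_congr rfl
    intro v hv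
    exact dist_eq hk (Finset.mem_range.1 hu) (Finset.mem_range.1 hv)
  have hs2 : ∑ u ∈ Finset.range ((p + q + 2) * (k - 1)),
      ∑ v ∈ Finset.range ((p + q + 2) * (k - 1)), (Ctilde k (p + 1) (q - 1)).dist u v
      = ∑ u ∈ Finset.range ((p + q + 2) * (k - 1)),
        ∑ v ∈ Finset.range ((p + q + 2) * (k - 1)), Dfun k (p + 1) (q - 1) u v := by
    apply Finset.sum_congr rfl
    intro u hu
    apply Finset.sum_congr rfl
    intro v hv
    exact dist_eq hk (by rw [hNe]; exact Finset.mem_range.1 hu)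
      (by rw [hNe]; exact Finset.mem_range.1 hv)
  have hZ : ((∑ u ∈ Finset.range ((p + q + 2) * (k - 1)),
        ∑ v ∈ Finset.range ((p + q + 2) * (k - 1)), Dfun k (p + 1) (q - 1) u v : ℕ) : ℤ)
      = ((∑ u ∈ Finset.range ((p + q + 2) * (k - 1)),
        ∑ v ∈ Finset.range ((p + q + 2) * (k - 1)), Dfun k p q u v : ℕ) : ℤ)
        + 2 * ((k : ℤ) - 1) * ((q : ℤ) - (p : ℤ) - 1) := by
    push_cast
    have hpt : ∀ u ∈ Finset.range ((p + q + 2) * (k - 1)),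
        ∑ v ∈ Finset.range ((p + q + 2) * (k - 1)), ((Dfun k (p + 1) (q - 1) u v : ℕ) : ℤ)
        = ∑ v ∈ Finset.range ((p + q + 2) * (k - 1)),
            (((Dfun k p q u v : ℕ) : ℤ) + Fv k p q u v) := by
      intro u _
      exact Finset.sum_congr rfl fun v _ => Dfun_cast (by omega) u v
    rw [Finset.sum_congr rfl hpt]
    have hsplit : ∑ u ∈ Finset.range ((p + q + 2) * (k - 1)),
        ∑ v ∈ Finset.range ((p + q + 2) * (k - 1)),
          (((Dfun k p q u v : ℕ) : ℤ) + Fv k p q u v)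
        = (∑ u ∈ Finset.range ((p + q + 2) * (k - 1)),
            ∑ v ∈ Finset.range ((p + q + 2) * (k - 1)), ((Dfun k p q u v : ℕ) : ℤ))
          + ∑ u ∈ Finset.range ((p + q + 2) * (k - 1)),
            ∑ v ∈ Finset.range ((p + q + 2) * (k - 1)), Fv k p q u v := by
      rw [← Finset.sum_add_distrib]
      apply Finset.sum_congr rfl
      intro u _
      rw [← Finset.sum_add_distrib]
    rw [hsplit, sum_diff hk hp hq2]
  have hNat : ∑ u ∈ Finset.range ((p + q + 2) * (k - 1)),
      ∑ v ∈ Finset.range ((p + q + 2) * (k - 1)), Dfun k (p + 1) (q - 1) u v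
      = (∑ u ∈ Finset.range ((p + q + 2) * (k - 1)),
          ∑ v ∈ Finset.range ((p + q + 2) * (k - 1)), Dfun k p q u v)
        + 2 * ((k - 1) * (q - p - 1)) := by
    have hc : ((2 * ((k - 1) * (q - p - 1)) : ℕ) : ℤ)
        = 2 * ((k : ℤ) - 1) * ((q : ℤ) - (p : ℤ) - 1) := by
      rw [show (q - p - 1 : ℕ) = q - (p + 1) by omega]
      push_cast [Nat.cast_sub (show p + 1 ≤ q by omega), Nat.cast_sub (show 1 ≤ k by omega)]
      ring
    have h2 : ((∑ u ∈ Finset.range ((p + q + 2) * (k - 1)),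
        ∑ v ∈ Finset.range ((p + q + 2) * (k - 1)), Dfun k (p + 1) (q - 1) u v : ℕ) : ℤ)
        = (((∑ u ∈ Finset.range ((p + q + 2) * (k - 1)),
            ∑ v ∈ Finset.range ((p + q + 2) * (k - 1)), Dfun k p q u v)
          + 2 * ((k - 1) * (q - p - 1)) : ℕ) : ℤ) := by
      rw [Nat.cast_add, hc, hZ]
    exact_mod_cast h2
  unfold FinHypergraph.trans
  rw [hv1, hv2, hs1, hs2, hNat, Nat.add_mul_div_left _ _ (by norm_num : 0 < 2)]

end Final

end Stmt10
/-- Lemma `cycle-max-moving3`: For `k ≥ 3`, `m ≥ 4`, if `1 ≤ p ≤ q - 2`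
and `p + q = m - 2`, then `σ(C̃^k_2(p+1,q-1)) - σ(C̃^k_2(p,q)) = (k-1)(q-p-1) > 0`. -/
theorem stmt10 (k m p q : ℕ) (hk : 3 ≤ k) (hm : 4 ≤ m) (hp : 1 ≤ p) (hpq : p ≤ q - 2)
    (hsum : p + q = m - 2) :
    (Ctilde k (p + 1) (q - 1)).trans = (Ctilde k p q).trans + (k - 1) * (q - p - 1) ∧
    0 < (k - 1) * (q - p - 1) := by
  refine ⟨Stmt10.main hk hp hpq, Nat.mul_pos (by omega) (by omega)⟩
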